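/- arXiv:2108.13204 — 3 statements merged into one kernel-verified Lean document; each statement's English description precedes it below -/
import Mathlib

section
/- For integer q ≥ 2, R_{1,q} := ∑_{n≥1} H_{n-1}/(n−1/2)^q = (q/2)·t̃(q+1) − 2·ln(2)·t̃(q) − (1/2)·∑_{j=1}^{q-2} t̃(q−j)·t̃(j+1), where H_n = ∑_{k=1}^n 1/k and t̃(s) = (2^s−1)ζ(s). -/
/-- odd harmonic numbers of order r: h_n^{(r)} = ∑_{k=1}^n 1/(k-1/2)^r -/
noncomputable def oddH (r n : ℕ) : ℝ := ∑ k ∈ Finset.range n, (((k : ℝ) + 1/2) ^ r)⁻¹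

/-- generalized harmonic numbers of order r: H_n^{(r)} = ∑_{k=1}^n 1/k^r -/
noncomputable def genH (r n : ℕ) : ℝ := ∑ k ∈ Finset.range n, (((k : ℝ) + 1) ^ r)⁻¹

/-- T_{p,q} = ∑_{n≥1} h_{n-1}^{(p)}/(n-1/2)^q -/
noncomputable def Tsum (p q : ℕ) : ℝ := ∑' n : ℕ, oddH p n / ((n : ℝ) + 1/2) ^ q

/-- S̃_{p,q} = ∑_{n≥1} h_n^{(p)}/n^q -/
noncomputable def Ssum (p q : ℕ) : ℝ := ∑' n : ℕ, oddH p (n + 1) / ((n : ℝ) + 1) ^ q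

/-- R_{p,q} = ∑_{n≥1} H_{n-1}^{(p)}/(n-1/2)^q -/
noncomputable def Rsum (p q : ℕ) : ℝ := ∑' n : ℕ, genH p n / ((n : ℝ) + 1/2) ^ q

/-- t̃(s) = ∑_{n≥1} 1/(n-1/2)^s -/
noncomputable def ttv (s : ℕ) : ℝ := ∑' n : ℕ, (((n : ℝ) + 1/2) ^ s)⁻¹

/-- ζ(s) = ∑_{n≥1} 1/n^s (for integer s ≥ 2) -/
noncomputable def zv (s : ℕ) : ℝ := ∑' n : ℕ, (((n : ℝ) + 1) ^ s)⁻¹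

open Finset Filter Topology

noncomputable def bb (n : ℕ) : ℝ := (n : ℝ) + 1/2

lemma bb_pos (n : ℕ) : 0 < bb n := by unfold bb; positivity
lemma oddH_eq (r n : ℕ) : oddH r n = ∑ k ∈ Finset.range n, ((bb k)^r)⁻¹ := rfl

lemma ttv_eq (s : ℕ) : ttv s = ∑' n : ℕ, ((bb n)^s)⁻¹ := rfl
lemma pfrac (q : ℕ) (hq : 1 ≤ q) (a c : ℝ) (ha : 0 < a) (hc : 0 < c) :
    (a * (a+c)^q)⁻¹ = (c^q * a)⁻¹ - ∑ i ∈ Finset.Icc 1 q, (c^(q+1-i) * (a+c)^i)⁻¹ := by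
  induction q with
  | zero => omega
  | succ q ih =>
    rcases Nat.eq_or_lt_of_le hq with h1 | h1
    · simp only [← h1]
      rw [show Finset.Icc 1 1 = {1} from rfl, Finset.sum_singleton]
      have hb : a + c ≠ 0 := by positivity
      field_simp
      ring
    · have hq' : 1 ≤ q := by omega
      have key : (a * (a+c)^(q+1))⁻¹ = c⁻¹ * ((a * (a+c)^q)⁻¹ - ((a+c)^(q+1))⁻¹) := by
        have hb : (0:ℝ) < a + c := by positivity
        field_simp
        ring
      have hins : Finset.Icc 1 (q+1) = insert (q+1) (Finset.Icc 1 q) := by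
        ext x; simp [Finset.mem_Icc, Finset.mem_insert]; omega
      rw [key, ih hq', hins, Finset.sum_insert (by simp)]
      have hb : (0:ℝ) < a + c := by positivity
      rw [mul_sub, mul_sub, Finset.mul_sum]
      have e1 : c⁻¹ * (c ^ q * a)⁻¹ = (c ^ (q+1) * a)⁻¹ := by
        rw [pow_succ]; field_simp
      have e2 : ∀ i ∈ Finset.Icc 1 q, c⁻¹ * (c ^ (q + 1 - i) * (a + c) ^ i)⁻¹
          = (c ^ (q + 1 + 1 - i) * (a + c) ^ i)⁻¹ := by
        intro i hi
        simp only [Finset.mem_Icc] at hi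
        have : q + 1 + 1 - i = (q + 1 - i) + 1 := by omega
        rw [this, pow_succ]
        field_simp
      have e3 : (c ^ (q + 1 + 1 - (q+1)) * (a + c) ^ (q+1))⁻¹ = c⁻¹ * ((a+c)^(q+1))⁻¹ := by
        have : q + 1 + 1 - (q+1) = 1 := by omega
        rw [this, pow_one, mul_inv]
      rw [Finset.sum_congr rfl e2, e1, e3]
      ring
lemma hasSum_tele (t : ℕ) : HasSum (fun j : ℕ => (bb (j+t))⁻¹ - (bb (j+t+1))⁻¹) ((bb t)⁻¹) := by
  have hnn : ∀ j : ℕ, 0 ≤ (bb (j+t))⁻¹ - (bb (j+t+1))⁻¹ := by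
    intro j
    have h1 : (0:ℝ) < bb (j+t) := bb_pos _
    have h2 : bb (j+t) ≤ bb (j+t+1) := by unfold bb; push_cast; linarith
    have := inv_anti₀ h1 h2
    linarith
  rw [hasSum_iff_tendsto_nat_of_nonneg hnn]
  have hps : ∀ n : ℕ, ∑ j ∈ Finset.range n, ((bb (j+t))⁻¹ - (bb (j+t+1))⁻¹)
      = (bb t)⁻¹ - (bb (n+t))⁻¹ := by
    intro n
    have := Finset.sum_range_sub' (fun j => (bb (j+t))⁻¹) n
    simp only [zero_add] at this
    rw [← this]
    apply Finset.sum_congr rfl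
    intro j _
    have : j + 1 + t = j + t + 1 := by omega
    rw [this]
  simp_rw [hps]
  have h0 : Tendsto (fun n : ℕ => (bb (n+t))⁻¹) atTop (𝓝 0) := by
    apply Tendsto.comp (tendsto_inv_atTop_zero)
    apply tendsto_atTop_add_const_right
    exact tendsto_natCast_atTop_atTop.comp (tendsto_add_atTop_nat t)
  simpa using (tendsto_const_nhds.sub h0)

lemma hasSum_teleM (M : ℕ) : HasSum (fun j : ℕ => (bb j)⁻¹ - (bb (j+M))⁻¹) (oddH 1 M) := by
  have key : ∀ j : ℕ, (bb j)⁻¹ - (bb (j+M))⁻¹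
      = ∑ t ∈ Finset.range M, ((bb (j+t))⁻¹ - (bb (j+t+1))⁻¹) := by
    intro j
    have := Finset.sum_range_sub' (fun t => (bb (j+t))⁻¹) M
    simp only [add_zero] at this
    rw [show ∑ t ∈ Finset.range M, ((bb (j+t))⁻¹ - (bb (j+t+1))⁻¹)
        = ∑ t ∈ Finset.range M, ((fun t => (bb (j+t))⁻¹) t - (fun t => (bb (j+t))⁻¹) (t+1)) from
      Finset.sum_congr rfl (fun t _ => by simp [show j + (t+1) = j + t + 1 from rfl]), this]
  have hodd : oddH 1 M = ∑ t ∈ Finset.range M, (bb t)⁻¹ := by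
    unfold oddH bb; simp
  rw [funext key, hodd]
  exact hasSum_sum fun t _ => hasSum_tele t
lemma genH_eq_harmonic (n : ℕ) : genH 1 n = (harmonic n : ℝ) := by
  unfold genH harmonic
  push_cast
  simp

lemma oddH_one_eq (N : ℕ) : oddH 1 N = 2 * genH 1 (2*N) - genH 1 N := by
  induction N with
  | zero => simp [oddH, genH]
  | succ N ih =>
    have h2 : 2 * (N+1) = (2*N) + 1 + 1 := by ring
    unfold oddH genH at *
    rw [Finset.sum_range_succ, h2, Finset.sum_range_succ, Finset.sum_range_succ,
      Finset.sum_range_succ, ih]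
    push_cast
    simp only [pow_one]
    have h1 : ((N:ℝ) + 1/2) ≠ 0 := by positivity
    have h3 : (2*(N:ℝ) + 1) ≠ 0 := by positivity
    have h4 : ((N:ℝ) + 1) ≠ 0 := by positivity
    field_simp
    ring

lemma hasSum_log2 : HasSum (fun j : ℕ => (bb j)⁻¹ - ((j:ℝ)+1)⁻¹) (2 * Real.log 2) := by
  have hnn : ∀ j : ℕ, 0 ≤ (bb j)⁻¹ - ((j:ℝ)+1)⁻¹ := by
    intro j
    have h1 : (0:ℝ) < bb j := bb_pos _
    have h2 : bb j ≤ (j:ℝ)+1 := by unfold bb; linarith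
    have := inv_anti₀ h1 h2
    linarith
  rw [hasSum_iff_tendsto_nat_of_nonneg hnn]
  have hps : ∀ N : ℕ, ∑ j ∈ Finset.range N, ((bb j)⁻¹ - ((j:ℝ)+1)⁻¹)
      = 2 * ((harmonic (2*N) : ℝ) - (harmonic N : ℝ)) := by
    intro N
    rw [Finset.sum_sub_distrib]
    have e1 : ∑ j ∈ Finset.range N, (bb j)⁻¹ = oddH 1 N := by
      unfold bb oddH; simp
    have e2 : ∑ j ∈ Finset.range N, ((j:ℝ)+1)⁻¹ = genH 1 N := by
      unfold genH; simp
    rw [e1, e2, oddH_one_eq, genH_eq_harmonic, genH_eq_harmonic]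
    ring
  simp_rw [hps]
  have hmono : Tendsto (fun N : ℕ => 2*N) atTop atTop :=
    tendsto_atTop_atTop_of_monotone (fun a b h => by omega) (fun b => ⟨b, by omega⟩)
  have t1 : Tendsto (fun N : ℕ => (harmonic (2*N) : ℝ) - Real.log ((2*N : ℕ))) atTop
      (𝓝 Real.eulerMascheroniConstant) := Real.tendsto_harmonic_sub_log.comp hmono
  have t2 : Tendsto (fun N : ℕ => (harmonic N : ℝ) - Real.log N) atTop
      (𝓝 Real.eulerMascheroniConstant) := Real.tendsto_harmonic_sub_log
  have t3 := (t1.sub t2).const_mul (2:ℝ)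
  simp only [sub_self, mul_zero] at t3
  -- (fun N => 2*((harm 2N - log 2N) - (harm N - log N))) → 0
  have key : ∀ᶠ N : ℕ in atTop, 2*(((harmonic (2*N) : ℝ) - Real.log ((2*N:ℕ))) -
      ((harmonic N : ℝ) - Real.log N)) + 2 * Real.log 2
      = 2 * ((harmonic (2*N) : ℝ) - (harmonic N : ℝ)) := by
    filter_upwards [eventually_gt_atTop 0] with N hN
    have hN' : (0:ℝ) < N := by exact_mod_cast hN
    have : Real.log ((2*N : ℕ)) = Real.log 2 + Real.log N := by
      push_cast
      rw [Real.log_mul (by norm_num) (ne_of_gt hN')]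
    rw [this]; ring
  have t4 := (t3.add (tendsto_const_nhds (x := 2 * Real.log 2)))
  rw [zero_add] at t4
  exact t4.congr' key
lemma tri {F : ℕ × ℕ → ℝ} (h0 : ∀ p, 0 ≤ F p) {g : ℕ → ℝ}
    (hg : ∀ s, ∑ p ∈ Finset.HasAntidiagonal.antidiagonal s, F p = g s) (hsum : Summable g) :
    Summable F ∧ ∑' p, F p = ∑' s, g s := by
  classical
  set e := Finset.HasAntidiagonal.sigmaAntidiagonalEquivProd (A := ℕ) with he
  have hfib : ∀ n : ℕ, ∑' y : (Finset.HasAntidiagonal.antidiagonal n : Finset (ℕ×ℕ)), F (e ⟨n, y⟩)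
      = g n := by
    intro n
    have : ∀ y : (Finset.HasAntidiagonal.antidiagonal n : Finset (ℕ×ℕ)), F (e ⟨n, y⟩) = F y := fun y => rfl
    rw [funext this, Finset.tsum_subtype (Finset.HasAntidiagonal.antidiagonal n) F, hg]
  have hFe : Summable (fun σ : Σ n : ℕ, (Finset.HasAntidiagonal.antidiagonal n : Finset (ℕ×ℕ)) => F (e σ)) := by
    rw [summable_sigma_of_nonneg (fun _ => h0 _)]
    refine ⟨fun n => Summable.of_finite, ?_⟩
    apply hsum.congr
    intro n
    exact (hfib n).symm
  have hF : Summable F := by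
    rw [← Equiv.summable_iff e]
    exact hFe
  refine ⟨hF, ?_⟩
  rw [← Equiv.tsum_eq e F, Summable.tsum_sigma hFe]
  exact tsum_congr hfib
lemma summable_sqrt_base : Summable (fun n : ℕ => Real.sqrt ((n:ℝ)+1) * (((n:ℝ)+1)^2)⁻¹) := by
  have h : Summable (fun n : ℕ => 1 / ((n:ℝ))^(3/2:ℝ)) :=
    Real.summable_one_div_nat_rpow.2 (by norm_num)
  have h1 : Summable (fun n : ℕ => 1 / (((n+1:ℕ)):ℝ)^(3/2:ℝ)) :=
    (summable_nat_add_iff 1).2 h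
  apply h1.congr
  intro n
  have hx : (0:ℝ) < (n:ℝ)+1 := by positivity
  push_cast
  rw [show ((n:ℝ)+1)^(3/2:ℝ) = ((n:ℝ)+1)^(1:ℝ) * ((n:ℝ)+1)^(1/2:ℝ) by
    rw [← Real.rpow_add hx]; norm_num]
  rw [Real.rpow_one, ← Real.sqrt_eq_rpow]
  have hs : Real.sqrt ((n:ℝ)+1) > 0 := Real.sqrt_pos.2 hx
  have hsq : Real.sqrt ((n:ℝ)+1) * Real.sqrt ((n:ℝ)+1) = (n:ℝ)+1 :=
    Real.mul_self_sqrt hx.le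
  field_simp
  nlinarith [hsq]

lemma genH_le_sqrt (n : ℕ) : genH 1 n ≤ 2 * Real.sqrt n := by
  induction n with
  | zero => simp [genH]
  | succ n ih =>
    unfold genH at *
    rw [Finset.sum_range_succ]
    simp only [pow_one] at *
    have key : ((n:ℝ)+1)⁻¹ ≤ 2 * Real.sqrt (n+1) - 2 * Real.sqrt n := by
      have hs : 0 ≤ Real.sqrt n := Real.sqrt_nonneg _
      have ht : 0 < Real.sqrt ((n:ℝ)+1) := Real.sqrt_pos.2 (by positivity)
      have hsq : Real.sqrt (n:ℝ) ^ 2 = n := Real.sq_sqrt (by positivity)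
      have htq : Real.sqrt ((n:ℝ)+1) ^ 2 = (n:ℝ)+1 := Real.sq_sqrt (by positivity)
      have ht1 : 1 ≤ Real.sqrt ((n:ℝ)+1) := by nlinarith
      have hst : Real.sqrt (n:ℝ) ≤ Real.sqrt ((n:ℝ)+1) := by nlinarith
      rw [inv_le_iff_one_le_mul₀ (by positivity)]
      nlinarith
    push_cast at *
    linarith

lemma oddH_le_one (p n : ℕ) (hp : 1 ≤ p) : oddH p n ≤ 2^(p-1) * oddH 1 n := by
  unfold oddH
  rw [Finset.mul_sum]
  apply Finset.sum_le_sum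
  intro k _
  have hk : (0:ℝ) < (k:ℝ) + 1/2 := by positivity
  have h1 : ((k:ℝ)+1/2)^p = ((k:ℝ)+1/2)^(p-1) * ((k:ℝ)+1/2)^1 := by
    rw [← pow_add]; congr 1; omega
  rw [h1, mul_inv]
  gcongr
  rw [show ((2:ℝ)^(p-1)) = (((1:ℝ)/2)^(p-1))⁻¹ by rw [one_div, inv_pow, inv_inv]]
  apply inv_anti₀ (by positivity)
  apply pow_le_pow_left₀ (by norm_num)
  linarith

lemma oddH_one_le (n : ℕ) : oddH 1 n ≤ 2 * genH 1 n := by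
  unfold oddH genH
  rw [Finset.mul_sum]
  apply Finset.sum_le_sum
  intro k _
  simp only [pow_one]
  rw [show (2:ℝ) * ((k:ℝ)+1)⁻¹ = (((k:ℝ)+1)/2)⁻¹ by rw [div_eq_mul_inv, mul_inv]; ring]
  apply inv_anti₀ (by positivity)
  linarith

lemma oddH_le_sqrt (p n : ℕ) (hp : 1 ≤ p) : oddH p n ≤ 2^(p+1) * Real.sqrt n := by
  calc oddH p n ≤ 2^(p-1) * oddH 1 n := oddH_le_one p n hp
    _ ≤ 2^(p-1) * (2 * (2 * Real.sqrt n)) := by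
        have h1 := oddH_one_le n
        have h2 := genH_le_sqrt n
        have : (0:ℝ) ≤ 2^(p-1) := by positivity
        nlinarith [Real.sqrt_nonneg (n:ℝ)]
    _ = 2^(p-1) * 2^2 * Real.sqrt n := by ring
    _ = 2^(p+1) * Real.sqrt n := by rw [← pow_add]; congr 2; omega
lemma summable_bb (i : ℕ) (hi : 2 ≤ i) : Summable (fun n : ℕ => ((bb n)^i)⁻¹) := by
  have h : Summable (fun n : ℕ => ((n:ℝ)^i)⁻¹) := Real.summable_nat_pow_inv.2 (by omega)
  have h1 : Summable (fun n : ℕ => (((n+1:ℕ):ℝ)^i)⁻¹) := (summable_nat_add_iff 1).2 h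
  have h2 := h1.mul_left ((2:ℝ)^i)
  apply h2.of_nonneg_of_le (fun n => inv_nonneg.2 (pow_nonneg (bb_pos n).le i))
  intro n
  push_cast
  have hb : ((n:ℝ)+1)/2 ≤ bb n := by unfold bb; linarith [Nat.cast_nonneg (α := ℝ) n]
  have h3 : (((n:ℝ)+1)/2)^i ≤ (bb n)^i := pow_le_pow_left₀ (by positivity) hb i
  have h4 : ((bb n)^i)⁻¹ ≤ ((((n:ℝ)+1)/2)^i)⁻¹ := inv_anti₀ (by positivity) h3
  calc ((bb n)^i)⁻¹ ≤ ((((n:ℝ)+1)/2)^i)⁻¹ := h4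
    _ = 2^i * (((n:ℝ)+1)^i)⁻¹ := by rw [div_pow, inv_div]; ring

noncomputable def Tail (i m : ℕ) : ℝ := ∑' j : ℕ, ((bb (m+j+1))^i)⁻¹

lemma summable_tail (i m : ℕ) (hi : 2 ≤ i) : Summable (fun j : ℕ => ((bb (m+j+1))^i)⁻¹) := by
  have h := (summable_nat_add_iff (m+1)).2 (summable_bb i hi)
  apply h.congr
  intro j
  have : j + (m+1) = m + j + 1 := by omega
  rw [this]

lemma ttv_split (i m : ℕ) (hi : 2 ≤ i) : ttv i = oddH i (m+1) + Tail i m := by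
  have h := Summable.sum_add_tsum_nat_add (f := fun n => ((bb n)^i)⁻¹) (m+1) (summable_bb i hi)
  rw [ttv_eq, ← h, oddH_eq]
  congr 1
  unfold Tail
  apply tsum_congr; intro j
  have : j + (m+1) = m + j + 1 := by omega
  rw [this]

lemma tail_nonneg (i m : ℕ) : 0 ≤ Tail i m :=
  tsum_nonneg (fun j => inv_nonneg.2 (pow_nonneg (bb_pos _).le _))
lemma oddH_nonneg (r n : ℕ) : 0 ≤ oddH r n :=
  Finset.sum_nonneg fun k _ => inv_nonneg.2 (pow_nonneg (by positivity) _)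

lemma bb_inv_pow_le (s i : ℕ) (hi : 2 ≤ i) :
    ((bb (s+1))^i)⁻¹ ≤ (((s:ℝ)+1)^2)⁻¹ := by
  have h1 : ((s:ℝ)+1) ≤ bb (s+1) := by unfold bb; push_cast; linarith
  have h2 : (1:ℝ) ≤ bb (s+1) := by unfold bb; push_cast; linarith [Nat.cast_nonneg (α := ℝ) s]
  have h3 : ((s:ℝ)+1)^2 ≤ (bb (s+1))^2 := pow_le_pow_left₀ (by positivity) h1 2
  have h4 : (bb (s+1))^2 ≤ (bb (s+1))^i := pow_le_pow_right₀ h2 hi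
  exact inv_anti₀ (by positivity) (le_trans h3 h4)

noncomputable def FP (p i : ℕ) : ℕ×ℕ → ℝ :=
  fun x => ((bb x.1)^p)⁻¹ * ((bb (x.1+x.2+1))^i)⁻¹

lemma FP_nonneg (p i : ℕ) (x : ℕ×ℕ) : 0 ≤ FP p i x :=
  mul_nonneg (inv_nonneg.2 (pow_nonneg (bb_pos _).le _)) (inv_nonneg.2 (pow_nonneg (bb_pos _).le _))

lemma FP_row (p i s : ℕ) :
    ∑ x ∈ Finset.HasAntidiagonal.antidiagonal s, FP p i x = oddH p (s+1) * ((bb (s+1))^i)⁻¹ := by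
  rw [Finset.Nat.sum_antidiagonal_eq_sum_range_succ_mk]
  rw [oddH_eq, Finset.sum_mul]
  apply Finset.sum_congr rfl
  intro k hk
  simp only [Finset.mem_range] at hk
  unfold FP
  have : k + (s - k) + 1 = s + 1 := by omega
  rw [this]

lemma gP_summable (p i : ℕ) (hp : 1 ≤ p) (hi : 2 ≤ i) :
    Summable (fun s : ℕ => oddH p (s+1) * ((bb (s+1))^i)⁻¹) := by
  have base : Summable (fun s : ℕ => (2:ℝ)^(p+1) * (Real.sqrt ((s:ℝ)+1) * (((s:ℝ)+1)^2)⁻¹)) :=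
    summable_sqrt_base.mul_left _
  apply Summable.of_nonneg_of_le
    (fun s => mul_nonneg (oddH_nonneg _ _) (inv_nonneg.2 (pow_nonneg (bb_pos _).le _)))
    (fun s => ?_) base
  calc oddH p (s+1) * ((bb (s+1))^i)⁻¹
      ≤ (2^(p+1) * Real.sqrt (s+1)) * (((s:ℝ)+1)^2)⁻¹ := by
        apply mul_le_mul (by exact_mod_cast oddH_le_sqrt p (s+1) hp) (bb_inv_pow_le s i hi)
          (inv_nonneg.2 (pow_nonneg (bb_pos _).le _))
          (by positivity)
    _ = 2^(p+1) * (Real.sqrt ((s:ℝ)+1) * (((s:ℝ)+1)^2)⁻¹) := by push_cast; ring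

lemma Tsum_summable (p i : ℕ) (hp : 1 ≤ p) (hi : 2 ≤ i) :
    Summable (fun n : ℕ => oddH p n / (bb n)^i) := by
  rw [← summable_nat_add_iff 1]
  apply (gP_summable p i hp hi).congr
  intro s
  rw [div_eq_mul_inv]

lemma FP_tsum (p i : ℕ) (hp : 1 ≤ p) (hi : 2 ≤ i) :
    Summable (FP p i) ∧ ∑' x, FP p i x = Tsum p i := by
  obtain ⟨hs, he⟩ := tri (FP_nonneg p i) (FP_row p i) (gP_summable p i hp hi)
  refine ⟨hs, ?_⟩
  rw [he]
  have h0 : Tsum p i = ∑' n : ℕ, oddH p n / (bb n)^i := rfl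
  rw [h0, Summable.tsum_eq_zero_add (Tsum_summable p i hp hi)]
  simp only [oddH_eq, Finset.range_zero, Finset.sum_empty, zero_div, zero_add]
  apply tsum_congr
  intro s
  rw [div_eq_mul_inv]
lemma hasSum_digamma (m : ℕ) :
    HasSum (fun j : ℕ => (((j:ℝ))+1)⁻¹ - (((j:ℝ))+1+bb m)⁻¹)
      (oddH 1 (m+1) - 2*Real.log 2) := by
  have h1 := (hasSum_teleM (m+1)).sub hasSum_log2
  apply h1.congr_fun
  intro j
  have e : bb (j+(m+1)) = ((j:ℝ))+1+bb m := by unfold bb; push_cast; ring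
  rw [e]
  ring

lemma inner_eval (q : ℕ) (hq : 2 ≤ q) (m : ℕ) :
    HasSum (fun j : ℕ => (((j:ℝ))+1)⁻¹ * ((bb (m+j+1))^q)⁻¹)
      (((bb m)^q)⁻¹ * (oddH 1 (m+1) - 2*Real.log 2)
        - ∑ i ∈ Finset.Icc 2 q, ((bb m)^(q+1-i))⁻¹ * Tail i m) := by
  have h2 := (hasSum_digamma m).mul_left (((bb m)^q)⁻¹)
  have h3 : HasSum (fun j : ℕ => ∑ i ∈ Finset.Icc 2 q, ((bb m)^(q+1-i))⁻¹ * ((bb (m+j+1))^i)⁻¹)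
      (∑ i ∈ Finset.Icc 2 q, ((bb m)^(q+1-i))⁻¹ * Tail i m) := by
    apply hasSum_sum
    intro i hi
    simp only [Finset.mem_Icc] at hi
    exact ((summable_tail i m hi.1).hasSum).mul_left _
  apply (h2.sub h3).congr_fun
  intro j
  set a : ℝ := ((j:ℝ))+1 with ha'
  set c : ℝ := bb m with hc'
  have ha : 0 < a := by positivity
  have hc : 0 < c := bb_pos m
  have hb : (0:ℝ) < a + c := by positivity
  have e : bb (m+j+1) = a + c := by
    rw [ha', hc']; unfold bb; push_cast; ring
  rw [e]
  have key := pfrac q (by omega) a c ha hc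
  have hsplit : Finset.Icc 1 q = insert 1 (Finset.Icc 2 q) := by
    ext x; simp [Finset.mem_Icc, Finset.mem_insert]; omega
  rw [hsplit, Finset.sum_insert (by simp)] at key
  have hq1 : q + 1 - 1 = q := by omega
  rw [hq1, pow_one] at key
  have lhs_eq : a⁻¹ * ((a+c)^q)⁻¹ = (a * (a+c)^q)⁻¹ := by rw [mul_inv]
  rw [lhs_eq, key]
  have hterm : ∀ i ∈ Finset.Icc 2 q, (c^(q+1-i) * (a+c)^i)⁻¹ = (c^(q+1-i))⁻¹ * ((a+c)^i)⁻¹ := by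
    intro i _; rw [mul_inv]
  rw [Finset.sum_congr rfl hterm]
  have e2 : (c^q * a)⁻¹ - (c^q * (a+c))⁻¹ = (c^q)⁻¹ * (a⁻¹ - (a+c)⁻¹) := by
    field_simp
  linarith [e2]
lemma W_eq (p i : ℕ) (hp : 1 ≤ p) (hi : 2 ≤ i) :
    Summable (fun m : ℕ => ((bb m)^p)⁻¹ * Tail i m) ∧
      ∑' m : ℕ, ((bb m)^p)⁻¹ * Tail i m = Tsum p i := by
  obtain ⟨hs, he⟩ := FP_tsum p i hp hi
  have hmarg : ∀ m : ℕ, ((bb m)^p)⁻¹ * Tail i m = ∑' j : ℕ, FP p i (m, j) := by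
    intro m
    unfold Tail FP
    rw [← tsum_mul_left]
  constructor
  · have := ((summable_prod_of_nonneg (fun x => FP_nonneg p i x)).1 hs).2
    exact this.congr (fun m => (hmarg m).symm)
  · rw [funext hmarg] at *
    rw [← he, Summable.tsum_prod hs]

-- FR rows

lemma FR_row (q s : ℕ) :
    ∑ x ∈ Finset.HasAntidiagonal.antidiagonal s, ((((x.2:ℕ):ℝ)+1)⁻¹ * ((bb (x.1+x.2+1))^q)⁻¹)
      = genH 1 (s+1) * ((bb (s+1))^q)⁻¹ := by
  rw [Finset.Nat.sum_antidiagonal_eq_sum_range_succ_mk]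
  have e1 : ∀ k ∈ Finset.range (s+1),
      ((((s-k:ℕ)):ℝ)+1)⁻¹ * ((bb (k+(s-k)+1))^q)⁻¹
        = ((((s-k:ℕ)):ℝ)+1)⁻¹ * ((bb (s+1))^q)⁻¹ := by
    intro k hk
    simp only [Finset.mem_range] at hk
    have : k + (s-k) + 1 = s + 1 := by omega
    rw [this]
  rw [Finset.sum_congr rfl e1, ← Finset.sum_mul]
  congr 1
  unfold genH
  simp only [pow_one]
  rw [← Finset.sum_range_reflect (fun j => (((j:ℕ):ℝ)+1)⁻¹) (s+1)]
  apply Finset.sum_congr rfl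
  intro k hk
  have : s + 1 - 1 - k = s - k := by omega
  rw [this]

lemma gR_summable (q : ℕ) (hq : 2 ≤ q) :
    Summable (fun s : ℕ => genH 1 (s+1) * ((bb (s+1))^q)⁻¹) := by
  have base : Summable (fun s : ℕ => (2:ℝ) * (Real.sqrt ((s:ℝ)+1) * (((s:ℝ)+1)^2)⁻¹)) :=
    summable_sqrt_base.mul_left _
  apply Summable.of_nonneg_of_le (fun s => ?_) (fun s => ?_) base
  · apply mul_nonneg _ (inv_nonneg.2 (pow_nonneg (bb_pos _).le _))
    apply Finset.sum_nonneg; intro k _; positivity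
  · calc genH 1 (s+1) * ((bb (s+1))^q)⁻¹
        ≤ (2 * Real.sqrt ((s:ℝ)+1)) * (((s:ℝ)+1)^2)⁻¹ := by
          apply mul_le_mul _ (bb_inv_pow_le s q hq)
            (inv_nonneg.2 (pow_nonneg (bb_pos _).le _)) (by positivity)
          have := genH_le_sqrt (s+1)
          push_cast at this ⊢
          exact this
      _ = 2 * (Real.sqrt ((s:ℝ)+1) * (((s:ℝ)+1)^2)⁻¹) := by ring

lemma Rsum_eq_double (q : ℕ) (hq : 2 ≤ q) :
    Rsum 1 q = ∑' m : ℕ, ∑' j : ℕ, ((((j:ℕ):ℝ)+1)⁻¹ * ((bb (m+j+1))^q)⁻¹) := by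
  set F : ℕ×ℕ → ℝ := fun x => (((x.2:ℕ):ℝ)+1)⁻¹ * ((bb (x.1+x.2+1))^q)⁻¹ with hF
  have h0 : ∀ x, 0 ≤ F x := fun x =>
    mul_nonneg (by positivity) (inv_nonneg.2 (pow_nonneg (bb_pos _).le _))
  obtain ⟨hs, he⟩ := tri h0 (fun s => FR_row q s) (gR_summable q hq)
  have hRsummable : Summable (fun n : ℕ => genH 1 n / (bb n)^q) := by
    rw [← summable_nat_add_iff 1]
    apply (gR_summable q hq).congr
    intro s
    rw [div_eq_mul_inv]
  have hR : Rsum 1 q = ∑' s : ℕ, genH 1 (s+1) * ((bb (s+1))^q)⁻¹ := by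
    have h1 : Rsum 1 q = ∑' n : ℕ, genH 1 n / (bb n)^q := rfl
    rw [h1, Summable.tsum_eq_zero_add hRsummable]
    simp only [genH, Finset.range_zero, Finset.sum_empty, zero_div, zero_add]
    apply tsum_congr
    intro s
    rw [div_eq_mul_inv]
  rw [hR, ← he, Summable.tsum_prod hs]
lemma bb_inv_pow_le2 (m i : ℕ) (hi : 2 ≤ i) :
    ((bb m)^i)⁻¹ ≤ 2^i * (((m:ℝ)+1)^2)⁻¹ := by
  have hb : ((m:ℝ)+1)/2 ≤ bb m := by unfold bb; linarith [Nat.cast_nonneg (α := ℝ) m]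
  have h3 : (((m:ℝ)+1)/2)^i ≤ (bb m)^i := pow_le_pow_left₀ (by positivity) hb i
  have h4 : ((bb m)^i)⁻¹ ≤ ((((m:ℝ)+1)/2)^i)⁻¹ := inv_anti₀ (by positivity) h3
  have h5 : (((m:ℝ)+1)^2) ≤ (((m:ℝ)+1)^i) := by
    apply pow_le_pow_right₀ (by linarith [Nat.cast_nonneg (α := ℝ) m]) hi
  calc ((bb m)^i)⁻¹ ≤ ((((m:ℝ)+1)/2)^i)⁻¹ := h4
    _ = 2^i * (((m:ℝ)+1)^i)⁻¹ := by rw [div_pow, inv_div]; ring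
    _ ≤ 2^i * (((m:ℝ)+1)^2)⁻¹ :=
        mul_le_mul_of_nonneg_left (inv_anti₀ (by positivity) h5) (by positivity)

lemma sym (p i : ℕ) (hp : 2 ≤ p) (hi : 2 ≤ i) :
    Tsum p i + Tsum i p = ttv p * ttv i - ttv (p+i) := by
  have hW := W_eq p i (by omega) hi
  have S1 : Summable (fun m : ℕ => oddH i m / (bb m)^p) := Tsum_summable i p (by omega) hp
  have S2 : Summable (fun m : ℕ => ((bb m)^(p+i))⁻¹) := summable_bb (p+i) (by omega)
  have key : ttv p * ttv i
      = ∑' m : ℕ, (oddH i m / (bb m)^p + ((bb m)^(p+i))⁻¹ + ((bb m)^p)⁻¹ * Tail i m) := by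
    have h1 : ttv p * ttv i = ∑' m : ℕ, ((bb m)^p)⁻¹ * ttv i := by
      rw [tsum_mul_right, ← ttv_eq]
    rw [h1]
    apply tsum_congr
    intro m
    rw [ttv_split i m hi, oddH_eq, Finset.sum_range_succ, ← oddH_eq]
    rw [mul_add, mul_add, div_eq_mul_inv, pow_add, mul_inv]
    ring
  rw [Summable.tsum_add (S1.add S2) hW.1, Summable.tsum_add S1 S2] at key
  have e1 : ∑' m : ℕ, oddH i m / (bb m)^p = Tsum i p := rfl
  rw [e1, ← ttv_eq, hW.2] at key
  linarith

theorem main (q : ℕ) (hq : 2 ≤ q) :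
    Rsum 1 q = Tsum 1 q + ttv (q+1) - 2*Real.log 2 * ttv q
      - ∑ i ∈ Finset.Icc 2 q, Tsum (q+1-i) i := by
  rw [Rsum_eq_double q hq]
  rw [tsum_congr (fun m => (inner_eval q hq m).tsum_eq)]
  have SA1 : Summable (fun m : ℕ => ((bb m)^q)⁻¹ * oddH 1 (m+1)) := by
    have base : Summable (fun m : ℕ => (2:ℝ)^(q+2) * (Real.sqrt ((m:ℝ)+1) * (((m:ℝ)+1)^2)⁻¹)) :=
      summable_sqrt_base.mul_left _
    apply Summable.of_nonneg_of_le
      (fun m => mul_nonneg (inv_nonneg.2 (pow_nonneg (bb_pos _).le _)) (oddH_nonneg _ _))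
      (fun m => ?_) base
    have h1 : oddH 1 (m+1) ≤ 2^2 * Real.sqrt ((m:ℝ)+1) := by
      have := oddH_le_sqrt 1 (m+1) le_rfl
      push_cast at this ⊢
      exact this
    have h2 := bb_inv_pow_le2 m q hq
    calc ((bb m)^q)⁻¹ * oddH 1 (m+1)
        ≤ (2^q * (((m:ℝ)+1)^2)⁻¹) * (2^2 * Real.sqrt ((m:ℝ)+1)) := by
          apply mul_le_mul h2 h1 (oddH_nonneg _ _) (by positivity)
      _ = 2^(q+2) * (Real.sqrt ((m:ℝ)+1) * (((m:ℝ)+1)^2)⁻¹) := by rw [pow_add]; ring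
  have SA2 : Summable (fun m : ℕ => ((bb m)^q)⁻¹ * (2*Real.log 2)) :=
    (summable_bb q hq).mul_right _
  have SB : Summable (fun m : ℕ => ∑ i ∈ Finset.Icc 2 q, ((bb m)^(q+1-i))⁻¹ * Tail i m) := by
    apply summable_sum
    intro i hi
    simp only [Finset.mem_Icc] at hi
    exact (W_eq (q+1-i) i (by omega) hi.1).1
  have SX : Summable (fun m : ℕ => ((bb m)^q)⁻¹ * (oddH 1 (m+1) - 2*Real.log 2)) := by
    apply (SA1.sub SA2).congr
    intro m; ring
  rw [Summable.tsum_sub SX SB]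
  have e1 : ∑' m : ℕ, ((bb m)^q)⁻¹ * (oddH 1 (m+1) - 2*Real.log 2)
      = (Tsum 1 q + ttv (q+1)) - 2*Real.log 2 * ttv q := by
    have e2 : ∀ m : ℕ, ((bb m)^q)⁻¹ * (oddH 1 (m+1) - 2*Real.log 2)
        = ((bb m)^q)⁻¹ * oddH 1 (m+1) - ((bb m)^q)⁻¹ * (2*Real.log 2) := fun m => by ring
    rw [tsum_congr e2, Summable.tsum_sub SA1 SA2]
    have e3 : ∑' m : ℕ, ((bb m)^q)⁻¹ * oddH 1 (m+1) = Tsum 1 q + ttv (q+1) := by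
      have e4 : ∀ m : ℕ, ((bb m)^q)⁻¹ * oddH 1 (m+1)
          = oddH 1 m / (bb m)^q + ((bb m)^(q+1))⁻¹ := by
        intro m
        rw [oddH_eq, Finset.sum_range_succ, ← oddH_eq, pow_one]
        rw [div_eq_mul_inv, pow_succ, mul_inv]
        ring
      rw [tsum_congr e4, Summable.tsum_add (Tsum_summable 1 q le_rfl hq) (summable_bb (q+1) (by omega))]
      rfl
    have e5 : ∑' m : ℕ, ((bb m)^q)⁻¹ * (2*Real.log 2) = 2*Real.log 2 * ttv q := by
      rw [tsum_mul_right, ← ttv_eq, mul_comm]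
    rw [e3, e5]
  rw [e1]
  have e6 : ∑' m : ℕ, ∑ i ∈ Finset.Icc 2 q, ((bb m)^(q+1-i))⁻¹ * Tail i m
      = ∑ i ∈ Finset.Icc 2 q, Tsum (q+1-i) i := by
    rw [Summable.tsum_finsetSum (fun i hi => by
      simp only [Finset.mem_Icc] at hi
      exact (W_eq (q+1-i) i (by omega) hi.1).1)]
    apply Finset.sum_congr rfl
    intro i hi
    simp only [Finset.mem_Icc] at hi
    exact (W_eq (q+1-i) i (by omega) hi.1).2
  rw [e6]

theorem stmt3 (q : ℕ) (hq : 2 ≤ q) :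
    Rsum 1 q =
      (q : ℝ) / 2 * ttv (q + 1) - 2 * Real.log 2 * ttv q
        - 1 / 2 * ∑ j ∈ Finset.Icc 1 (q - 2), ttv (q - j) * ttv (j + 1) := by
  rw [main q hq]
  have hsplit : Finset.Icc 2 q = insert q (Finset.Icc 2 (q-1)) := by
    ext x; simp [Finset.mem_Icc, Finset.mem_insert]; omega
  rw [hsplit, Finset.sum_insert (by simp [Finset.mem_Icc]; omega)]
  have hq1 : q + 1 - q = 1 := by omega
  rw [hq1]
  set S2 := ∑ i ∈ Finset.Icc 2 (q-1), Tsum (q+1-i) i with hS2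
  have hre : S2 = ∑ i ∈ Finset.Icc 2 (q-1), Tsum i (q+1-i) := by
    rw [hS2]
    apply Finset.sum_nbij' (fun i => q+1-i) (fun i => q+1-i)
    · intro a ha; simp only [Finset.mem_Icc] at ha ⊢; omega
    · intro a ha; simp only [Finset.mem_Icc] at ha ⊢; omega
    · intro a ha; simp only [Finset.mem_Icc] at ha; omega
    · intro a ha; simp only [Finset.mem_Icc] at ha; omega
    · intro a ha; simp only [Finset.mem_Icc] at ha
      have h1 : q + 1 - (q+1-a) = a := by omega
      rw [h1]
  have hpair : S2 + S2 = ∑ i ∈ Finset.Icc 2 (q-1), (ttv (q+1-i) * ttv i - ttv (q+1)) := by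
    nth_rewrite 2 [hre]
    rw [hS2, ← Finset.sum_add_distrib]
    apply Finset.sum_congr rfl
    intro i hi
    simp only [Finset.mem_Icc] at hi
    have h1 := sym (q+1-i) i (by omega) (by omega)
    have h2 : q+1-i+i = q+1 := by omega
    rw [h2] at h1
    linarith
  have hcard : ∑ i ∈ Finset.Icc 2 (q-1), (ttv (q+1-i) * ttv i - ttv (q+1))
      = (∑ i ∈ Finset.Icc 2 (q-1), ttv (q+1-i) * ttv i) - ((q:ℝ)-2) * ttv (q+1) := by
    rw [Finset.sum_sub_distrib, Finset.sum_const, Nat.card_Icc, nsmul_eq_mul]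
    have : ((q - 1 + 1 - 2 : ℕ) : ℝ) = (q:ℝ) - 2 := by
      have h3 : q - 1 + 1 - 2 = q - 2 := by omega
      rw [h3, Nat.cast_sub hq]
      norm_num
    rw [this]
  have htarget : ∑ j ∈ Finset.Icc 1 (q - 2), ttv (q - j) * ttv (j + 1)
      = ∑ i ∈ Finset.Icc 2 (q-1), ttv (q+1-i) * ttv i := by
    apply Finset.sum_nbij' (fun j => j+1) (fun i => i-1)
    · intro a ha; simp only [Finset.mem_Icc] at ha ⊢; omega
    · intro a ha; simp only [Finset.mem_Icc] at ha ⊢; omega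
    · intro a ha; simp only [Finset.mem_Icc] at ha; omega
    · intro a ha; simp only [Finset.mem_Icc] at ha; omega
    · intro a ha; simp only [Finset.mem_Icc] at ha
      have h1 : q + 1 - (a+1) = q - a := by omega
      rw [h1]
  rw [htarget]
  have hfin : S2 = (1/2) * (∑ i ∈ Finset.Icc 2 (q-1), ttv (q+1-i) * ttv i)
      - ((q:ℝ)-2)/2 * ttv (q+1) := by
    rw [hcard] at hpair
    linarith
  rw [hfin]
  ring
end

section
/- R_{1,2} = ∑_{n≥1} H_{n-1}/(n−1/2)² = 7ζ(3) − π²·ln(2). -/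
open Finset Filter Real Topology

namespace R12aux

/-! ### p-series helpers -/

lemma s_sq1 : Summable (fun n : ℕ => (((n : ℝ) + 1) ^ 2)⁻¹) := by
  have h := hasSum_zeta_two.summable
  have h1 := (summable_nat_add_iff 1).2 h
  refine h1.congr fun n => ?_
  push_cast
  rw [one_div]

lemma s_sq (c : ℝ) (hc : 1/2 ≤ c) : Summable (fun n : ℕ => (((n : ℝ) + c) ^ 2)⁻¹) := by
  have hc0 : (0:ℝ) < c := by linarith
  refine Summable.of_nonneg_of_le (fun n => by positivity) (fun n => ?_) (s_sq1.mul_left 4)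
  have hn : (0:ℝ) ≤ (n:ℝ) := n.cast_nonneg
  have h1 : ((n:ℝ)+1)^2 ≤ 4 * ((n:ℝ)+c)^2 := by nlinarith
  have h2 : (((n:ℝ)+c)^2)⁻¹ ≤ (((n:ℝ)+1)^2 / 4)⁻¹ :=
    inv_anti₀ (by positivity) (by linarith)
  rw [inv_div, div_eq_mul_inv] at h2
  exact h2

lemma s_cube1 : Summable (fun n : ℕ => (((n : ℝ) + 1) ^ 3)⁻¹) := by
  refine Summable.of_nonneg_of_le (fun n => by positivity) (fun n => ?_) s_sq1
  apply inv_anti₀ (by positivity)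
  have hn : (1:ℝ) ≤ (n:ℝ) + 1 := by
    have : (0:ℝ) ≤ (n:ℝ) := n.cast_nonneg; linarith
  calc ((n:ℝ)+1)^2 = ((n:ℝ)+1)^2 * 1 := by ring
    _ ≤ ((n:ℝ)+1)^2 * ((n:ℝ)+1) := by nlinarith
    _ = ((n:ℝ)+1)^3 := by ring

lemma s_cube (c : ℝ) (hc : 1/2 ≤ c) : Summable (fun n : ℕ => (((n : ℝ) + c) ^ 3)⁻¹) := by
  have hc0 : (0:ℝ) < c := by linarith
  refine Summable.of_nonneg_of_le (fun n => by positivity) (fun n => ?_) (s_cube1.mul_left 8)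
  have hn : (0:ℝ) ≤ (n:ℝ) := n.cast_nonneg
  have h1 : ((n:ℝ)+1)^3 ≤ 8 * ((n:ℝ)+c)^3 := by
    have hp : ((n:ℝ)+1)^3 ≤ (2*((n:ℝ)+c))^3 :=
      pow_le_pow_left₀ (by positivity) (by linarith) 3
    calc ((n:ℝ)+1)^3 ≤ (2*((n:ℝ)+c))^3 := hp
      _ = 8 * ((n:ℝ)+c)^3 := by ring
  have h2 : (((n:ℝ)+c)^3)⁻¹ ≤ (((n:ℝ)+1)^3 / 8)⁻¹ :=
    inv_anti₀ (by positivity) (by linarith)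
  rw [inv_div, div_eq_mul_inv] at h2
  exact h2

lemma s_rpow : Summable (fun n : ℕ => (((n : ℝ) + 1) ^ (3/2 : ℝ))⁻¹) := by
  have h := summable_nat_rpow_inv.2 (by norm_num : (1:ℝ) < 3/2)
  have h1 := (summable_nat_add_iff 1).2 h
  refine h1.congr fun n => ?_
  push_cast
  ring_nf

/-! ### telescoping sums -/

lemma hasSum_tel (c : ℝ) (hc : 0 < c) :
    HasSum (fun m : ℕ => ((m : ℝ) + c)⁻¹ - ((m : ℝ) + c + 1)⁻¹) c⁻¹ := by
  rw [hasSum_iff_tendsto_nat_of_nonneg]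
  · have key : ∀ N : ℕ, ∑ m ∈ range N, (((m : ℝ) + c)⁻¹ - ((m : ℝ) + c + 1)⁻¹)
        = c⁻¹ - ((N : ℝ) + c)⁻¹ := by
      intro N
      induction N with
      | zero => simp
      | succ n ih =>
        rw [Finset.sum_range_succ, ih]
        push_cast
        ring
    simp only [key]
    have h1 : Tendsto (fun N : ℕ => ((N : ℝ) + c)) atTop atTop :=
      tendsto_atTop_add_const_right atTop c tendsto_natCast_atTop_atTop
    have h2 := h1.inv_tendsto_atTop
    simpa using tendsto_const_nhds.sub h2
  · intro m
    have h1 : (0:ℝ) < (m:ℝ) + c := by positivity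
    have := inv_anti₀ h1 (by linarith : (m:ℝ) + c ≤ (m:ℝ) + c + 1)
    linarith

lemma oddH_one (d : ℕ) : oddH 1 d = ∑ k ∈ range d, ((k : ℝ) + 1/2)⁻¹ := by
  unfold oddH
  exact Finset.sum_congr rfl fun k _ => by rw [pow_one]

lemma hasSum_oddtel (d : ℕ) :
    HasSum (fun k : ℕ => ((k : ℝ) + 1/2)⁻¹ - (((k + d : ℕ) : ℝ) + 1/2)⁻¹) (oddH 1 d) := by
  set f : ℕ → ℝ := fun k => ((k : ℝ) + 1/2)⁻¹ with hf
  have fanti : ∀ {a b : ℕ}, a ≤ b → f b ≤ f a := by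
    intro a b hab
    apply inv_anti₀ (by positivity)
    have : (a:ℝ) ≤ b := Nat.cast_le.2 hab
    linarith
  rw [hasSum_iff_tendsto_nat_of_nonneg]
  · have key : ∀ N : ℕ, ∑ k ∈ range N, (f k - f (k + d))
        = ∑ k ∈ range d, f k - ∑ k ∈ range d, f (N + k) := by
      intro N
      induction N with
      | zero => simp
      | succ n ih =>
        rw [Finset.sum_range_succ, ih]
        have htel : ∑ k ∈ range d, (f (n + k) - f (n + k + 1)) = f (n + 0) - f (n + d) :=
          Finset.sum_range_sub' (fun k => f (n + k)) d
        have hsplit : ∑ k ∈ range d, (f (n + k) - f (n + k + 1))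
            = ∑ k ∈ range d, f (n + k) - ∑ k ∈ range d, f (n + k + 1) :=
          Finset.sum_sub_distrib _ _
        have harg : ∀ k, f (n + k + 1) = f (n + 1 + k) := by
          intro k; congr 1; omega
        rw [hsplit] at htel
        simp only [harg] at htel
        have htel' : ∑ k ∈ range d, f (n + k) - ∑ k ∈ range d, f (n + 1 + k)
            = f n - f (n + d) := by simpa using htel
        linarith
    rw [oddH_one]
    refine (tendsto_congr key).mpr ?_
    have h0 : Tendsto (fun N : ℕ => ∑ k ∈ range d, f (N + k)) atTop (𝓝 0) := by
      have : Tendsto (fun N : ℕ => ∑ k ∈ range d, f (N + k)) atTop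
          (𝓝 (∑ k ∈ range d, (0:ℝ))) := by
        refine tendsto_finset_sum _ fun k _ => ?_
        have h1 : Tendsto (fun N : ℕ => ((N + k : ℕ) : ℝ) + 1/2) atTop atTop := by
          apply tendsto_atTop_add_const_right
          exact tendsto_natCast_atTop_atTop.comp (tendsto_add_atTop_nat k)
        simpa [hf, Pi.inv_def] using h1.inv_tendsto_atTop
      simpa using this
    have := (tendsto_const_nhds (x := ∑ k ∈ range d, f k)).sub h0
    simpa [hf] using this
  · intro k
    have := fanti (Nat.le_add_right k d)
    simp only [hf] at this ⊢
    push_cast at this ⊢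
    linarith

/-! ### alternating harmonic series -/

lemma hasSum_alt :
    HasSum (fun k : ℕ => (2*(k:ℝ) + 1)⁻¹ - (2*(k:ℝ) + 2)⁻¹) (Real.log 2) := by
  rw [hasSum_iff_tendsto_nat_of_nonneg]
  · have key : ∀ N : ℕ, ∑ k ∈ range N, ((2*(k:ℝ) + 1)⁻¹ - (2*(k:ℝ) + 2)⁻¹)
        = (harmonic (2*N) : ℝ) - (harmonic N : ℝ) := by
      intro N
      induction N with
      | zero => simp
      | succ n ih =>
        rw [Finset.sum_range_succ, ih]
        have h2 : 2 * (n+1) = (2*n + 1) + 1 := by ring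
        rw [h2, harmonic_succ, harmonic_succ, harmonic_succ]
        have h1 : ((n:ℝ)+1) ≠ 0 := by positivity
        have h3 : 2*(n:ℝ)+1 ≠ 0 := by positivity
        have h4 : 2*(n:ℝ)+2 ≠ 0 := by positivity
        push_cast
        field_simp
        ring
    simp only [key]
    have hmul : Tendsto (fun N : ℕ => 2 * N) atTop atTop :=
      tendsto_atTop_atTop.2 fun b => ⟨b, fun a ha => by omega⟩
    have h2N : Tendsto (fun N : ℕ => (harmonic (2*N) : ℝ) - Real.log ((2*N : ℕ) : ℝ)) atTop
        (𝓝 Real.eulerMascheroniConstant) := by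
      simpa [Function.comp_def] using Real.tendsto_harmonic_sub_log.comp hmul
    have hN : Tendsto (fun N : ℕ => (harmonic N : ℝ) - Real.log N) atTop
        (𝓝 Real.eulerMascheroniConstant) := Real.tendsto_harmonic_sub_log
    have hcomb := (h2N.sub hN).add (tendsto_const_nhds (x := Real.log 2))
    rw [sub_self, zero_add] at hcomb
    refine Tendsto.congr' ?_ hcomb
    filter_upwards [eventually_ge_atTop 1] with N hN1
    have hN0 : (N:ℝ) ≠ 0 := by
      have : (1:ℝ) ≤ (N:ℝ) := by exact_mod_cast hN1
      linarith
    have hcast : ((2*N : ℕ) : ℝ) = 2 * (N:ℝ) := by push_cast; ring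
    rw [hcast, Real.log_mul two_ne_zero hN0]
    ring
  · intro k
    have h1 : (0:ℝ) < 2*(k:ℝ) + 1 := by positivity
    have := inv_anti₀ h1 (by linarith : 2*(k:ℝ) + 1 ≤ 2*(k:ℝ) + 2)
    linarith

lemma hasSum_half_tel :
    HasSum (fun k : ℕ => ((k:ℝ) + 1)⁻¹ - ((k:ℝ) + 1/2)⁻¹) (-(2 * Real.log 2)) := by
  have h := hasSum_alt.mul_left (-2)
  have he : (fun k : ℕ => (-2) * ((2*(k:ℝ) + 1)⁻¹ - (2*(k:ℝ) + 2)⁻¹))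
      = fun k : ℕ => ((k:ℝ) + 1)⁻¹ - ((k:ℝ) + 1/2)⁻¹ := by
    funext k
    have h1 : (2*(k:ℝ) + 1) ≠ 0 := by positivity
    have h2 : (2*(k:ℝ) + 2) ≠ 0 := by positivity
    have h3 : ((k:ℝ) + 1) ≠ 0 := by positivity
    have h4 : ((k:ℝ) + 1/2) ≠ 0 := by positivity
    field_simp
    ring
  rw [he] at h
  rwa [neg_mul] at h

/-! ### the tail function T2 and the two double families -/

noncomputable def T2 (j : ℕ) : ℝ := ∑' m : ℕ, (((m : ℝ) + j + 3/2) ^ 2)⁻¹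

lemma sT2 (j : ℕ) : Summable (fun m : ℕ => (((m : ℝ) + j + 3/2) ^ 2)⁻¹) := by
  have h := s_sq ((j:ℝ) + 3/2) (by
    have : (0:ℝ) ≤ (j:ℝ) := j.cast_nonneg
    linarith)
  exact h.congr fun m => by ring_nf

lemma hasSum_T2 (j : ℕ) :
    HasSum (fun m : ℕ => (((m : ℝ) + j + 3/2) ^ 2)⁻¹) (T2 j) := (sT2 j).hasSum

lemma T2_nonneg (j : ℕ) : 0 ≤ T2 j := tsum_nonneg fun m => by positivity

lemma T2_le (j : ℕ) : T2 j ≤ ((j:ℝ) + 1)⁻¹ := by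
  have htel := hasSum_tel ((j:ℝ) + 1) (by positivity)
  have hle : ∀ m : ℕ, (((m : ℝ) + j + 3/2) ^ 2)⁻¹
      ≤ ((m:ℝ) + ((j:ℝ)+1))⁻¹ - ((m:ℝ) + ((j:ℝ)+1) + 1)⁻¹ := by
    intro m
    have hm : (0:ℝ) ≤ (m:ℝ) := m.cast_nonneg
    have hj : (0:ℝ) ≤ (j:ℝ) := j.cast_nonneg
    have h1 : (0:ℝ) < (m:ℝ) + ((j:ℝ)+1) := by positivity
    have h2 : (0:ℝ) < (m:ℝ) + ((j:ℝ)+1) + 1 := by positivity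
    have heq : ((m:ℝ) + ((j:ℝ)+1))⁻¹ - ((m:ℝ) + ((j:ℝ)+1) + 1)⁻¹
        = (((m:ℝ) + ((j:ℝ)+1)) * ((m:ℝ) + ((j:ℝ)+1) + 1))⁻¹ := by
      rw [inv_sub_inv h1.ne' h2.ne']
      congr 1
      ring
    rw [heq]
    apply inv_anti₀ (by positivity)
    nlinarith
  calc T2 j ≤ ∑' m : ℕ, (((m:ℝ) + ((j:ℝ)+1))⁻¹ - ((m:ℝ) + ((j:ℝ)+1) + 1)⁻¹) :=
        Summable.tsum_le_tsum hle (sT2 j) htel.summable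
    _ = ((j:ℝ) + 1)⁻¹ := htel.tsum_eq

/-- the double family giving `Rsum 1 2`:  `G (j, k) = 1/((k+1) (j+k+3/2)^2)` -/
noncomputable def G : ℕ × ℕ → ℝ :=
  fun p => (((p.2 : ℝ) + 1) * (((p.1 : ℝ) + (p.2 : ℝ) + 3/2) ^ 2))⁻¹

/-- the double family giving `Tsum 1 2`:  `Hf (j, m) = 1/((j+1/2) (j+m+3/2)^2)` -/
noncomputable def Hf : ℕ × ℕ → ℝ :=
  fun p => (((p.1 : ℝ) + 1/2) * (((p.1 : ℝ) + (p.2 : ℝ) + 3/2) ^ 2))⁻¹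

lemma G_nonneg (p : ℕ × ℕ) : 0 ≤ G p := by unfold G; positivity

lemma Hf_nonneg (p : ℕ × ℕ) : 0 ≤ Hf p := by unfold Hf; positivity

lemma hasSum_G_fiber (j : ℕ) :
    HasSum (fun k : ℕ => G (j, k))
      ((((j:ℝ) + 1/2) ^ 2)⁻¹ * (-(2 * Real.log 2) + oddH 1 (j+1))
        - ((j:ℝ) + 1/2)⁻¹ * T2 j) := by
  have hA := hasSum_half_tel.add (hasSum_oddtel (j+1))
  have heA : (fun k : ℕ => (((k:ℝ) + 1)⁻¹ - ((k:ℝ) + 1/2)⁻¹)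
      + (((k:ℝ) + 1/2)⁻¹ - (((k + (j+1) : ℕ) : ℝ) + 1/2)⁻¹))
      = fun k : ℕ => ((k:ℝ) + 1)⁻¹ - ((k:ℝ) + (j:ℝ) + 3/2)⁻¹ := by
    funext k
    push_cast
    ring_nf
  rw [heA] at hA
  have h5 := (hA.mul_left ((((j:ℝ) + 1/2) ^ 2)⁻¹)).sub ((hasSum_T2 j).mul_left (((j:ℝ) + 1/2)⁻¹))
  have he5 : (fun k : ℕ => (((j:ℝ) + 1/2) ^ 2)⁻¹ * (((k:ℝ) + 1)⁻¹ - ((k:ℝ) + (j:ℝ) + 3/2)⁻¹)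
      - ((j:ℝ) + 1/2)⁻¹ * (((k:ℝ) + (j:ℝ) + 3/2) ^ 2)⁻¹)
      = fun k : ℕ => G (j, k) := by
    funext k
    unfold G
    have hk : (0:ℝ) ≤ (k:ℝ) := k.cast_nonneg
    have hj : (0:ℝ) ≤ (j:ℝ) := j.cast_nonneg
    have h1 : ((k:ℝ) + 1) ≠ 0 := by positivity
    have h2 : ((k:ℝ) + (j:ℝ) + 3/2) ≠ 0 := by positivity
    have h3 : ((j:ℝ) + 1/2) ≠ 0 := by positivity
    field_simp
    ring
  rw [he5] at h5
  exact h5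

lemma hasSum_H_fiber (j : ℕ) :
    HasSum (fun m : ℕ => Hf (j, m)) (((j:ℝ) + 1/2)⁻¹ * T2 j) := by
  have h := (hasSum_T2 j).mul_left (((j:ℝ) + 1/2)⁻¹)
  have he : (fun m : ℕ => ((j:ℝ) + 1/2)⁻¹ * (((m:ℝ) + j + 3/2) ^ 2)⁻¹)
      = fun m : ℕ => Hf (j, m) := by
    funext m
    unfold Hf
    rw [mul_inv]
    congr 2
    ring
  rwa [he] at h

lemma summable_G : Summable G := by
  rw [summable_prod_of_nonneg (Pi.le_def.mpr fun p => G_nonneg p)]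
  refine ⟨fun j => (hasSum_G_fiber j).summable, ?_⟩
  set C : ℝ := ∑' k : ℕ, (((k:ℝ) + 1) ^ (3/2 : ℝ))⁻¹ with hC
  refine Summable.of_nonneg_of_le (fun j => tsum_nonneg fun k => G_nonneg (j, k))
    (fun j => ?_) (s_rpow.mul_right C)
  have hle : ∀ k : ℕ, G (j, k)
      ≤ (((j:ℝ) + 1) ^ (3/2 : ℝ))⁻¹ * (((k:ℝ) + 1) ^ (3/2 : ℝ))⁻¹ := by
    intro k
    have hk : (0:ℝ) ≤ (k:ℝ) := k.cast_nonneg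
    have hj : (0:ℝ) ≤ (j:ℝ) := j.cast_nonneg
    have hx : (0:ℝ) < (k:ℝ) + 1 := by positivity
    have hy : (0:ℝ) < (j:ℝ) + (k:ℝ) + 3/2 := by positivity
    have hj1 : (0:ℝ) < (j:ℝ) + 1 := by positivity
    have key : ((j:ℝ) + 1) ^ (3/2 : ℝ) * ((k:ℝ) + 1) ^ (3/2 : ℝ)
        ≤ ((k:ℝ) + 1) * (((j:ℝ) + (k:ℝ) + 3/2) ^ 2) := by
      have e1 : ((j:ℝ) + (k:ℝ) + 3/2) ^ (2:ℕ)
          = ((j:ℝ) + (k:ℝ) + 3/2) ^ (3/2 : ℝ) * ((j:ℝ) + (k:ℝ) + 3/2) ^ (1/2 : ℝ) := by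
        rw [← Real.rpow_add hy]
        norm_num
      have e2 : ((k:ℝ) + 1) ^ (3/2 : ℝ) = ((k:ℝ) + 1) * ((k:ℝ) + 1) ^ (1/2 : ℝ) := by
        rw [show (3/2 : ℝ) = 1 + 1/2 by norm_num, Real.rpow_add hx, Real.rpow_one]
      have b1 : ((j:ℝ) + 1) ^ (3/2 : ℝ) ≤ ((j:ℝ) + (k:ℝ) + 3/2) ^ (3/2 : ℝ) :=
        Real.rpow_le_rpow hj1.le (by linarith) (by norm_num)
      have b2 : ((k:ℝ) + 1) ^ (1/2 : ℝ) ≤ ((j:ℝ) + (k:ℝ) + 3/2) ^ (1/2 : ℝ) :=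
        Real.rpow_le_rpow hx.le (by linarith) (by norm_num)
      calc ((j:ℝ) + 1) ^ (3/2 : ℝ) * ((k:ℝ) + 1) ^ (3/2 : ℝ)
          = ((j:ℝ) + 1) ^ (3/2 : ℝ) * (((k:ℝ) + 1) * ((k:ℝ) + 1) ^ (1/2 : ℝ)) := by rw [e2]
        _ ≤ ((j:ℝ) + (k:ℝ) + 3/2) ^ (3/2 : ℝ)
              * (((k:ℝ) + 1) * ((j:ℝ) + (k:ℝ) + 3/2) ^ (1/2 : ℝ)) := by
            apply mul_le_mul b1 (mul_le_mul_of_nonneg_left b2 hx.le) (by positivity) (by positivity)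
        _ = ((k:ℝ) + 1) * (((j:ℝ) + (k:ℝ) + 3/2) ^ (3/2 : ℝ)
              * ((j:ℝ) + (k:ℝ) + 3/2) ^ (1/2 : ℝ)) := by ring
        _ = ((k:ℝ) + 1) * (((j:ℝ) + (k:ℝ) + 3/2) ^ (2:ℕ)) := by rw [← e1]
    unfold G
    rw [← mul_inv]
    exact inv_anti₀ (by positivity) key
  calc ∑' k : ℕ, G (j, k)
      ≤ ∑' k : ℕ, (((j:ℝ) + 1) ^ (3/2 : ℝ))⁻¹ * (((k:ℝ) + 1) ^ (3/2 : ℝ))⁻¹ :=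
        Summable.tsum_le_tsum hle (hasSum_G_fiber j).summable (s_rpow.mul_left _)
    _ = (((j:ℝ) + 1) ^ (3/2 : ℝ))⁻¹ * C := tsum_mul_left

lemma summable_H : Summable Hf := by
  rw [summable_prod_of_nonneg (Pi.le_def.mpr fun p => Hf_nonneg p)]
  refine ⟨fun j => (hasSum_H_fiber j).summable, ?_⟩
  refine Summable.of_nonneg_of_le (fun j => tsum_nonneg fun m => Hf_nonneg (j, m))
    (fun j => ?_) (s_sq1.mul_left 2)
  rw [(hasSum_H_fiber j).tsum_eq]
  have hj : (0:ℝ) ≤ (j:ℝ) := j.cast_nonneg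
  have b1 : ((j:ℝ) + 1/2)⁻¹ * T2 j ≤ ((j:ℝ) + 1/2)⁻¹ * ((j:ℝ) + 1)⁻¹ :=
    mul_le_mul_of_nonneg_left (T2_le j) (by positivity)
  have b2 : ((j:ℝ) + 1/2)⁻¹ * ((j:ℝ) + 1)⁻¹ ≤ 2 * (((j:ℝ) + 1) ^ 2)⁻¹ := by
    rw [← mul_inv]
    have h2 : ((((j:ℝ) + 1) ^ 2) / 2)⁻¹ = 2 * (((j:ℝ) + 1) ^ 2)⁻¹ := by
      rw [inv_div, div_eq_mul_inv]
    rw [← h2]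
    apply inv_anti₀ (by positivity)
    nlinarith
  linarith

/-! ### antidiagonal regrouping -/

lemma summable_sigma_of_summable {F : ℕ × ℕ → ℝ} (hF : Summable F) :
    Summable fun x : Σ n : ℕ, {p // p ∈ Finset.HasAntidiagonal.antidiagonal n} => F x.2 :=
  Finset.HasAntidiagonal.sigmaAntidiagonalEquivProd.summable_iff.mpr hF

lemma tsum_antidiagonal {F : ℕ × ℕ → ℝ} (hF : Summable F) :
    ∑' p : ℕ × ℕ, F p = ∑' n : ℕ, ∑ kl ∈ Finset.HasAntidiagonal.antidiagonal n, F kl := by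
  have h2 := Summable.tsum_sigma' (f := fun x : Σ n : ℕ, {p // p ∈ Finset.HasAntidiagonal.antidiagonal n} => F x.2)
    (fun n => (hasSum_fintype _).summable) (summable_sigma_of_summable hF)
  calc ∑' p : ℕ × ℕ, F p
      = ∑' x : Σ n : ℕ, {p // p ∈ Finset.HasAntidiagonal.antidiagonal n}, F x.2 :=
        (Finset.HasAntidiagonal.sigmaAntidiagonalEquivProd.tsum_eq F).symm
    _ = ∑' (n : ℕ) (c : {p // p ∈ Finset.HasAntidiagonal.antidiagonal n}), F c.1 := h2
    _ = ∑' n : ℕ, ∑ kl ∈ Finset.HasAntidiagonal.antidiagonal n, F kl :=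
        tsum_congr fun n => Finset.tsum_subtype _ F

lemma summable_antidiagonal {F : ℕ × ℕ → ℝ} (hF : Summable F) :
    Summable fun n : ℕ => ∑ kl ∈ Finset.HasAntidiagonal.antidiagonal n, F kl := by
  have h := (summable_sigma_of_summable hF).sigma'
    (fun n => (hasSum_fintype _).summable)
  exact h.congr fun n => Finset.tsum_subtype _ F

lemma genH_one (d : ℕ) : genH 1 d = ∑ k ∈ range d, ((k : ℝ) + 1)⁻¹ := by
  unfold genH
  exact Finset.sum_congr rfl fun k _ => by rw [pow_one]

lemma antidiag_H (n : ℕ) :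
    ∑ kl ∈ Finset.HasAntidiagonal.antidiagonal n, Hf kl = oddH 1 (n+1) * (((n:ℝ) + 3/2) ^ 2)⁻¹ := by
  rw [Finset.Nat.sum_antidiagonal_eq_sum_range_succ_mk, oddH_one, Finset.sum_mul]
  refine Finset.sum_congr rfl fun k hk => ?_
  have hk' : k ≤ n := Nat.lt_succ_iff.mp (Finset.mem_range.mp hk)
  unfold Hf
  have hcast : ((n - k : ℕ) : ℝ) = (n:ℝ) - (k:ℝ) := by
    rw [Nat.cast_sub hk']
  have h2 : (k:ℝ) + ((n:ℝ) - (k:ℝ)) + 3/2 = (n:ℝ) + 3/2 := by ring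
  simp only [hcast, h2]
  rw [mul_inv]

lemma antidiag_G (n : ℕ) :
    ∑ kl ∈ Finset.HasAntidiagonal.antidiagonal n, G kl = genH 1 (n+1) * (((n:ℝ) + 3/2) ^ 2)⁻¹ := by
  rw [Finset.Nat.sum_antidiagonal_eq_sum_range_succ_mk]
  have step : ∀ k ∈ range (n+1), G (k, n - k)
      = (((n - k : ℕ) : ℝ) + 1)⁻¹ * (((n:ℝ) + 3/2) ^ 2)⁻¹ := by
    intro k hk
    have hk' : k ≤ n := Nat.lt_succ_iff.mp (Finset.mem_range.mp hk)
    unfold G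
    have hcast : ((n - k : ℕ) : ℝ) = (n:ℝ) - (k:ℝ) := by
      rw [Nat.cast_sub hk']
    have h2 : (k:ℝ) + ((n:ℝ) - (k:ℝ)) + 3/2 = (n:ℝ) + 3/2 := by ring
    simp only [hcast, h2]
    rw [mul_inv]
  rw [Finset.sum_congr rfl step]
  have hrefl := Finset.sum_range_reflect
    (fun k : ℕ => (((k : ℕ) : ℝ) + 1)⁻¹ * (((n:ℝ) + 3/2) ^ 2)⁻¹) (n+1)
  simp only [Nat.add_sub_cancel] at hrefl
  rw [hrefl, genH_one, Finset.sum_mul]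

/-! ### identification of the two totals -/

lemma summable_t : Summable (fun n : ℕ => oddH 1 n / ((n:ℝ) + 1/2) ^ 2) := by
  apply (summable_nat_add_iff 1).1
  refine ((summable_antidiagonal summable_H).congr fun n => ?_)
  rw [antidiag_H, div_eq_mul_inv]
  congr 2
  push_cast
  ring

lemma Tsum_eq_total : Tsum 1 2 = ∑' p : ℕ × ℕ, Hf p := by
  have hterm : ∀ b : ℕ, oddH 1 (b+1) / (((b+1 : ℕ) : ℝ) + 1/2) ^ 2
      = ∑ kl ∈ Finset.HasAntidiagonal.antidiagonal b, Hf kl := by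
    intro b
    rw [antidiag_H, div_eq_mul_inv]
    congr 2
    push_cast
    ring
  rw [show Tsum 1 2 = ∑' n : ℕ, oddH 1 n / ((n:ℝ) + 1/2) ^ 2 from rfl,
    Summable.tsum_eq_zero_add summable_t, tsum_antidiagonal summable_H, tsum_congr hterm]
  simp [oddH]

lemma Rsum_eq_total : Rsum 1 2 = ∑' p : ℕ × ℕ, G p := by
  have hterm : ∀ b : ℕ, genH 1 (b+1) / (((b+1 : ℕ) : ℝ) + 1/2) ^ 2
      = ∑ kl ∈ Finset.HasAntidiagonal.antidiagonal b, G kl := by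
    intro b
    rw [antidiag_G, div_eq_mul_inv]
    congr 2
    push_cast
    ring
  have hsf : Summable (fun n : ℕ => genH 1 n / ((n:ℝ) + 1/2) ^ 2) := by
    apply (summable_nat_add_iff 1).1
    refine ((summable_antidiagonal summable_G).congr fun n => ?_)
    exact (hterm n).symm
  rw [show Rsum 1 2 = ∑' n : ℕ, genH 1 n / ((n:ℝ) + 1/2) ^ 2 from rfl,
    Summable.tsum_eq_zero_add hsf, tsum_antidiagonal summable_G, tsum_congr hterm]
  simp [genH]

/-! ### evaluation of `ttv` in terms of `zv` -/

lemma ttv_eq (s : ℕ) (hz : Summable (fun n : ℕ => (((n:ℝ) + 1) ^ s)⁻¹)) :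
    ttv s = (2 ^ s - 1) * zv s := by
  set f : ℕ → ℝ := fun n => (((n:ℝ) + 1) ^ s)⁻¹ with hfdef
  have hzf : HasSum f (zv s) := hz.hasSum
  have hodd : HasSum (fun k : ℕ => f (2 * k + 1)) (((2:ℝ) ^ s)⁻¹ * zv s) := by
    have h := hzf.mul_left (((2:ℝ) ^ s)⁻¹)
    have he : (fun k : ℕ => ((2:ℝ) ^ s)⁻¹ * f k) = fun k : ℕ => f (2 * k + 1) := by
      funext k
      simp only [hfdef]
      rw [← mul_inv, ← mul_pow]
      congr 2
      push_cast
      ring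
    rwa [he] at h
  have hevensum : Summable (fun k : ℕ => f (2 * k)) := by
    refine Summable.of_nonneg_of_le (fun k => by simp only [hfdef]; positivity)
      (fun k => ?_) hz
    simp only [hfdef]
    apply inv_anti₀ (by positivity)
    apply pow_le_pow_left₀ (by positivity)
    push_cast
    linarith [(k.cast_nonneg : (0:ℝ) ≤ (k:ℝ))]
  have hcomb := hevensum.hasSum.even_add_odd hodd
  have hE : ∑' k : ℕ, f (2 * k) = zv s - ((2:ℝ) ^ s)⁻¹ * zv s := by
    have h := hzf.unique hcomb
    linarith
  have httv : ttv s = ∑' k : ℕ, (2:ℝ) ^ s * f (2 * k) := by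
    unfold ttv
    refine tsum_congr fun n => ?_
    simp only [hfdef]
    have h1 : ((n:ℝ) + 1/2) = (((2 * n : ℕ) : ℝ) + 1) / 2 := by push_cast; ring
    have h2 : (0:ℝ) < ((2 * n : ℕ) : ℝ) + 1 := by positivity
    rw [h1, div_pow, inv_div, div_eq_mul_inv]
  rw [httv, tsum_mul_left, hE]
  have h2s : ((2:ℝ) ^ s) ≠ 0 := by positivity
  field_simp

lemma zv_two : zv 2 = π ^ 2 / 6 := by
  have h0 : HasSum (fun n : ℕ => 1 / ((n:ℝ)) ^ 2) (π ^ 2 / 6) := hasSum_zeta_two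
  have h1 := (hasSum_nat_add_iff' (f := fun n : ℕ => 1 / ((n:ℝ)) ^ 2) 1).2 h0
  simp only [Finset.range_one, Finset.sum_singleton, Nat.cast_zero] at h1
  norm_num at h1
  unfold zv
  exact h1.tsum_eq

end R12aux

theorem stmt4 : Rsum 1 2 = 7 * zv 3 - Real.pi ^ 2 * Real.log 2 := by
  have HPG : HasSum (fun j : ℕ => ((((j:ℝ) + 1/2) ^ 2)⁻¹ * (-(2 * Real.log 2) + oddH 1 (j+1))
      - ((j:ℝ) + 1/2)⁻¹ * R12aux.T2 j)) (Rsum 1 2) := by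
    rw [R12aux.Rsum_eq_total]
    exact R12aux.summable_G.hasSum.prod_fiberwise fun j => R12aux.hasSum_G_fiber j
  have HPH : HasSum (fun j : ℕ => ((j:ℝ) + 1/2)⁻¹ * R12aux.T2 j) (Tsum 1 2) := by
    rw [R12aux.Tsum_eq_total]
    exact R12aux.summable_H.hasSum.prod_fiberwise fun j => R12aux.hasSum_H_fiber j
  have Ht : HasSum (fun n : ℕ => oddH 1 n / ((n:ℝ) + 1/2) ^ 2) (Tsum 1 2) :=
    R12aux.summable_t.hasSum
  have H2 : HasSum (fun n : ℕ => (((n:ℝ) + 1/2) ^ 2)⁻¹) (ttv 2) :=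
    (R12aux.s_sq (1/2) le_rfl).hasSum
  have H3 : HasSum (fun n : ℕ => (((n:ℝ) + 1/2) ^ 3)⁻¹) (ttv 3) :=
    (R12aux.s_cube (1/2) le_rfl).hasSum
  have comb := ((Ht.add H3).sub (H2.mul_left (2 * Real.log 2))).sub HPH
  have hfun : (fun n : ℕ => oddH 1 n / ((n:ℝ) + 1/2) ^ 2 + (((n:ℝ) + 1/2) ^ 3)⁻¹
        - 2 * Real.log 2 * (((n:ℝ) + 1/2) ^ 2)⁻¹ - ((n:ℝ) + 1/2)⁻¹ * R12aux.T2 n)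
      = fun j : ℕ => ((((j:ℝ) + 1/2) ^ 2)⁻¹ * (-(2 * Real.log 2) + oddH 1 (j+1))
        - ((j:ℝ) + 1/2)⁻¹ * R12aux.T2 j) := by
    funext j
    have hsucc : oddH 1 (j+1) = oddH 1 j + ((j:ℝ) + 1/2)⁻¹ := by
      unfold oddH
      rw [Finset.sum_range_succ, pow_one]
    rw [hsucc]
    have ha : ((j:ℝ) + 1/2) ≠ 0 := by positivity
    field_simp
    ring
  rw [hfun] at comb
  have hval := HPG.unique comb
  have h2 : ttv 2 = π ^ 2 / 2 := by
    rw [R12aux.ttv_eq 2 R12aux.s_sq1, R12aux.zv_two]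
    ring
  have h3 : ttv 3 = 7 * zv 3 := by
    rw [R12aux.ttv_eq 3 R12aux.s_cube1]
    norm_num
  rw [hval, h2, h3]
  ring
end

section
/- T_{2,2} − 2S̃_{1,3} − S̃_{2,2} = −π⁴/12, where T_{p,q} = ∑_{n≥1} h_{n-1}^{(p)}/(n−1/2)^q and S̃_{p,q} = ∑_{n≥1} h_n^{(p)}/n^q, with h_n^{(r)} = ∑_{k=1}^n 1/(k−1/2)^r. -/
open Finset Function Real

section auxvals

/-- odd part of a zeta-type series -/
lemma odd_part_hasSum {s : ℕ} {z : ℝ}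
    (hz : HasSum (fun n : ℕ => (1 : ℝ) / (n : ℝ) ^ s) z) :
    HasSum (fun n : ℕ => (1 : ℝ) / ((2 * n + 1 : ℕ) : ℝ) ^ s) (z - z / 2 ^ s) := by
  have hinj : Function.Injective (fun n : ℕ => 2 * n + 1) := by
    intro a b h
    dsimp only at h
    omega
  have hodd : Summable (fun n : ℕ => (1 : ℝ) / ((2 * n + 1 : ℕ) : ℝ) ^ s) :=
    hz.summable.comp_injective hinj
  have heq : (fun n : ℕ => (1 : ℝ) / ((2 * n : ℕ) : ℝ) ^ s)
      = fun n : ℕ => ((1 : ℝ) / (n : ℝ) ^ s) / 2 ^ s := by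
    funext n
    push_cast
    rw [div_div, mul_pow, mul_comm ((2:ℝ)^s)]
  have he : HasSum (fun n : ℕ => (1 : ℝ) / ((2 * n : ℕ) : ℝ) ^ s) (z / 2 ^ s) := by
    rw [heq]; exact hz.div_const _
  have ho := hodd.hasSum
  have ht := HasSum.even_add_odd (f := fun n : ℕ => (1 : ℝ) / (n : ℝ) ^ s) he ho
  have hz' := ht.unique hz
  have heval : ∑' n : ℕ, (1 : ℝ) / ((2 * n + 1 : ℕ) : ℝ) ^ s = z - z / 2 ^ s := by linarith
  rwa [heval] at ho

lemma hasSum_ttv_two :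
    HasSum (fun n : ℕ => (((n : ℝ) + 1/2) ^ 2)⁻¹) (Real.pi ^ 2 / 2) := by
  have ho := (odd_part_hasSum hasSum_zeta_two).mul_left 4
  have hf : (fun n : ℕ => 4 * ((1 : ℝ) / ((2 * n + 1 : ℕ) : ℝ) ^ 2))
      = fun n : ℕ => (((n : ℝ) + 1/2) ^ 2)⁻¹ := by
    funext n
    have h0 : (2 * (n : ℝ) + 1) ≠ 0 := by positivity
    have h1 : ((n : ℝ) + 1/2) ≠ 0 := by positivity
    push_cast
    field_simp
    ring
  have hv : 4 * (Real.pi ^ 2 / 6 - Real.pi ^ 2 / 6 / 2 ^ 2) = Real.pi ^ 2 / 2 := by ring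
  rwa [hf, hv] at ho

lemma hasSum_ttv_four :
    HasSum (fun n : ℕ => (((n : ℝ) + 1/2) ^ 4)⁻¹) (Real.pi ^ 4 / 6) := by
  have ho := (odd_part_hasSum hasSum_zeta_four).mul_left 16
  have hf : (fun n : ℕ => 16 * ((1 : ℝ) / ((2 * n + 1 : ℕ) : ℝ) ^ 4))
      = fun n : ℕ => (((n : ℝ) + 1/2) ^ 4)⁻¹ := by
    funext n
    have h0 : (2 * (n : ℝ) + 1) ≠ 0 := by positivity
    have h1 : ((n : ℝ) + 1/2) ≠ 0 := by positivity
    push_cast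
    field_simp
    ring
  have hv : 16 * (Real.pi ^ 4 / 90 - Real.pi ^ 4 / 90 / 2 ^ 4) = Real.pi ^ 4 / 6 := by ring
  rwa [hf, hv] at ho

end auxvals

section machinery

/-- the master double-sum term -/
noncomputable def FF (p : ℕ × ℕ) : ℝ :=
  (((p.1 : ℝ) + 1/2) ^ 2)⁻¹ * (((p.2 : ℝ) + 1/2) ^ 2)⁻¹

lemma summable_FF : Summable FF := by
  have h := hasSum_ttv_two.summable
  have h2 := h.mul_of_nonneg h (fun k => by positivity) (fun k => by positivity)
  exact h2.congr fun p => rfl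

lemma tsum_FF : ∑' p : ℕ × ℕ, FF p = (Real.pi ^ 2 / 2) * (Real.pi ^ 2 / 2) :=
  (hasSum_ttv_two.mul_eq hasSum_ttv_two summable_FF.hasSum).symm

lemma tsum_triangle_le (c : ℕ → ℕ → ℝ)
    (h : Summable fun p : ℕ × ℕ => c p.1 (p.1 + p.2)) :
    ∑' p : ℕ × ℕ, c p.1 (p.1 + p.2) = ∑' n : ℕ, ∑ k ∈ Finset.range (n + 1), c k n := by
  classical
  have hi : Function.Injective (fun p : ℕ × ℕ => (p.1 + p.2, p.1)) := by
    rintro ⟨a, b⟩ ⟨a', b'⟩ hpq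
    simp only [Prod.mk.injEq] at hpq
    obtain ⟨h1, h2⟩ := hpq
    exact Prod.ext h2 (by omega)
  set g : ℕ × ℕ → ℝ := fun q => if q.2 ≤ q.1 then c q.2 q.1 else 0 with hg
  have hzero : ∀ q ∉ Set.range (fun p : ℕ × ℕ => (p.1 + p.2, p.1)), g q = 0 := by
    rintro ⟨n, k⟩ hq
    by_cases hkn : k ≤ n
    · refine absurd ⟨(k, n - k), ?_⟩ hq
      have hnk : k + (n - k) = n := by omega
      simp [hnk]
    · simp only [hg]
      rw [if_neg hkn]
  have hsupp : Function.support g ⊆ Set.range (fun p : ℕ × ℕ => (p.1 + p.2, p.1)) := by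
    intro q hq
    by_contra hc
    exact hq (hzero q hc)
  have hcomp : (fun p : ℕ × ℕ => g (p.1 + p.2, p.1)) = fun p : ℕ × ℕ => c p.1 (p.1 + p.2) := by
    funext p
    simp only [hg]
    rw [if_pos (Nat.le_add_right _ _)]
  have hsum_g : Summable g := by
    rw [← hi.summable_iff hzero]
    exact h.congr (fun p => congrFun hcomp.symm p)
  have key : ∑' p : ℕ × ℕ, g (p.1 + p.2, p.1) = ∑' q : ℕ × ℕ, g q := hi.tsum_eq hsupp
  calc ∑' p : ℕ × ℕ, c p.1 (p.1 + p.2) = ∑' p : ℕ × ℕ, g (p.1 + p.2, p.1) := by rw [hcomp]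
    _ = ∑' q : ℕ × ℕ, g q := key
    _ = ∑' n : ℕ, ∑' k : ℕ, g (n, k) := Summable.tsum_prod' hsum_g (fun n => by
          apply summable_of_ne_finset_zero (s := Finset.range (n + 1))
          intro k hk
          simp only [Finset.mem_range] at hk
          simp only [hg]
          rw [if_neg (by omega)])
    _ = ∑' n : ℕ, ∑ k ∈ Finset.range (n + 1), c k n := by
          refine tsum_congr fun n => ?_
          rw [tsum_eq_sum (s := Finset.range (n + 1)) (fun k hk => by
            simp only [Finset.mem_range] at hk
            simp only [hg]
            rw [if_neg (by omega)])]
          refine Finset.sum_congr rfl fun k hk => ?_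
          simp only [Finset.mem_range] at hk
          simp only [hg]
          rw [if_pos (by omega)]

lemma tsum_triangle_lt (c : ℕ → ℕ → ℝ)
    (h : Summable fun p : ℕ × ℕ => c p.1 (p.1 + p.2 + 1)) :
    ∑' p : ℕ × ℕ, c p.1 (p.1 + p.2 + 1) = ∑' n : ℕ, ∑ k ∈ Finset.range n, c k n := by
  classical
  have hi : Function.Injective (fun p : ℕ × ℕ => (p.1 + p.2 + 1, p.1)) := by
    rintro ⟨a, b⟩ ⟨a', b'⟩ hpq
    simp only [Prod.mk.injEq] at hpq
    obtain ⟨h1, h2⟩ := hpq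
    exact Prod.ext h2 (by omega)
  set g : ℕ × ℕ → ℝ := fun q => if q.2 < q.1 then c q.2 q.1 else 0 with hg
  have hzero : ∀ q ∉ Set.range (fun p : ℕ × ℕ => (p.1 + p.2 + 1, p.1)), g q = 0 := by
    rintro ⟨n, k⟩ hq
    by_cases hkn : k < n
    · refine absurd ⟨(k, n - k - 1), ?_⟩ hq
      have hnk : k + (n - k - 1) + 1 = n := by omega
      simp [hnk]
    · simp only [hg]
      rw [if_neg hkn]
  have hsupp : Function.support g ⊆ Set.range (fun p : ℕ × ℕ => (p.1 + p.2 + 1, p.1)) := by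
    intro q hq
    by_contra hc
    exact hq (hzero q hc)
  have hcomp : (fun p : ℕ × ℕ => g (p.1 + p.2 + 1, p.1))
      = fun p : ℕ × ℕ => c p.1 (p.1 + p.2 + 1) := by
    funext p
    simp only [hg]
    rw [if_pos (by omega : p.1 < p.1 + p.2 + 1)]
  have hsum_g : Summable g := by
    rw [← hi.summable_iff hzero]
    exact h.congr (fun p => congrFun hcomp.symm p)
  have key : ∑' p : ℕ × ℕ, g (p.1 + p.2 + 1, p.1) = ∑' q : ℕ × ℕ, g q := hi.tsum_eq hsupp
  calc ∑' p : ℕ × ℕ, c p.1 (p.1 + p.2 + 1) = ∑' p : ℕ × ℕ, g (p.1 + p.2 + 1, p.1) := by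
        rw [hcomp]
    _ = ∑' q : ℕ × ℕ, g q := key
    _ = ∑' n : ℕ, ∑' k : ℕ, g (n, k) := Summable.tsum_prod' hsum_g (fun n => by
          apply summable_of_ne_finset_zero (s := Finset.range n)
          intro k hk
          simp only [Finset.mem_range] at hk
          simp only [hg]
          rw [if_neg (by omega)])
    _ = ∑' n : ℕ, ∑ k ∈ Finset.range n, c k n := by
          refine tsum_congr fun n => ?_
          rw [tsum_eq_sum (s := Finset.range n) (fun k hk => by
            simp only [Finset.mem_range] at hk
            simp only [hg]
            rw [if_neg (by omega)])]
          refine Finset.sum_congr rfl fun k hk => ?_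
          simp only [Finset.mem_range] at hk
          simp only [hg]
          rw [if_pos (by omega)]

end machinery

section Spart

noncomputable def P1 (p : ℕ × ℕ) : ℝ :=
  ((((p.1 + p.2 : ℕ) : ℝ) + 1) ^ 2)⁻¹ * (((p.1 : ℝ) + 1/2) ^ 2)⁻¹

noncomputable def P2 (p : ℕ × ℕ) : ℝ :=
  ((((p.1 + p.2 : ℕ) : ℝ) + 1) ^ 2)⁻¹ * (((p.2 : ℝ) + 1/2) ^ 2)⁻¹

noncomputable def P3 (p : ℕ × ℕ) : ℝ :=
  2 * (((((p.1 + p.2 : ℕ) : ℝ) + 1) ^ 3)⁻¹ * (((p.1 : ℝ) + 1/2) ^ 1)⁻¹)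

noncomputable def P4 (p : ℕ × ℕ) : ℝ :=
  2 * (((((p.1 + p.2 : ℕ) : ℝ) + 1) ^ 3)⁻¹ * (((p.2 : ℝ) + 1/2) ^ 1)⁻¹)

/-- partial fraction identity -/
lemma pf_identity (p : ℕ × ℕ) : FF p = P1 p + P2 p + P3 p + P4 p := by
  obtain ⟨k, j⟩ := p
  have hk : ((k : ℝ) + 1/2) ≠ 0 := by positivity
  have hj : ((j : ℝ) + 1/2) ≠ 0 := by positivity
  have hs : ((k : ℝ) + (j : ℝ) + 1) ≠ 0 := by positivity
  unfold FF P1 P2 P3 P4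
  push_cast
  field_simp
  ring

lemma P1_le (p : ℕ × ℕ) : P1 p ≤ FF p := by
  unfold P1 FF
  have h1 : (0:ℝ) < (p.2 : ℝ) + 1/2 := by positivity
  have h2 : ((p.2 : ℝ) + 1/2) ≤ (((p.1 + p.2 : ℕ) : ℝ) + 1) := by
    push_cast; linarith [(by positivity : (0:ℝ) ≤ (p.1:ℝ))]
  rw [mul_comm]
  gcongr

lemma P2_le (p : ℕ × ℕ) : P2 p ≤ FF p := by
  unfold P2 FF
  have h1 : (0:ℝ) < (p.1 : ℝ) + 1/2 := by positivity
  have h2 : ((p.1 : ℝ) + 1/2) ≤ (((p.1 + p.2 : ℕ) : ℝ) + 1) := by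
    push_cast; linarith [(by positivity : (0:ℝ) ≤ (p.2:ℝ))]
  gcongr

lemma P3_le (p : ℕ × ℕ) : P3 p ≤ 2 * FF p := by
  unfold P3 FF
  set x : ℝ := (p.1 : ℝ) + 1/2 with hx
  set y : ℝ := (p.2 : ℝ) + 1/2 with hy
  set s : ℝ := ((p.1 + p.2 : ℕ) : ℝ) + 1 with hs
  have hxp : (0:ℝ) < x := by rw [hx]; positivity
  have hyp : (0:ℝ) < y := by rw [hy]; positivity
  have hsp : (0:ℝ) < s := by rw [hs]; positivity
  have hxs : x ≤ s := by rw [hx, hs]; push_cast; linarith [(by positivity : (0:ℝ) ≤ (p.2:ℝ))]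
  have hys : y ≤ s := by rw [hy, hs]; push_cast; linarith [(by positivity : (0:ℝ) ≤ (p.1:ℝ))]
  have hy2 : y ^ 2 ≤ s ^ 2 := by nlinarith
  have hmid : x * y ^ 2 ≤ s * s ^ 2 := mul_le_mul hxs hy2 (by positivity) (by positivity)
  have key : x ^ 2 * y ^ 2 ≤ s ^ 3 * x ^ 1 := by
    nlinarith [mul_le_mul_of_nonneg_left hmid hxp.le]
  have h1 : (s ^ 3 * x ^ 1)⁻¹ ≤ (x ^ 2 * y ^ 2)⁻¹ :=
    inv_anti₀ (by positivity) key
  calc 2 * ((s ^ 3)⁻¹ * (x ^ 1)⁻¹) = 2 * (s ^ 3 * x ^ 1)⁻¹ := by rw [mul_inv]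
    _ ≤ 2 * (x ^ 2 * y ^ 2)⁻¹ := by linarith
    _ = 2 * ((x ^ 2)⁻¹ * (y ^ 2)⁻¹) := by rw [mul_inv]

lemma P4_le (p : ℕ × ℕ) : P4 p ≤ 2 * FF p := by
  unfold P4 FF
  set x : ℝ := (p.1 : ℝ) + 1/2 with hx
  set y : ℝ := (p.2 : ℝ) + 1/2 with hy
  set s : ℝ := ((p.1 + p.2 : ℕ) : ℝ) + 1 with hs
  have hxp : (0:ℝ) < x := by rw [hx]; positivity
  have hyp : (0:ℝ) < y := by rw [hy]; positivity
  have hsp : (0:ℝ) < s := by rw [hs]; positivity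
  have hxs : x ≤ s := by rw [hx, hs]; push_cast; linarith [(by positivity : (0:ℝ) ≤ (p.2:ℝ))]
  have hys : y ≤ s := by rw [hy, hs]; push_cast; linarith [(by positivity : (0:ℝ) ≤ (p.1:ℝ))]
  have hx2 : x ^ 2 ≤ s ^ 2 := by nlinarith
  have hmid : y * x ^ 2 ≤ s * s ^ 2 := mul_le_mul hys hx2 (by positivity) (by positivity)
  have key : x ^ 2 * y ^ 2 ≤ s ^ 3 * y ^ 1 := by
    nlinarith [mul_le_mul_of_nonneg_left hmid hyp.le]
  have h1 : (s ^ 3 * y ^ 1)⁻¹ ≤ (x ^ 2 * y ^ 2)⁻¹ :=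
    inv_anti₀ (by positivity) key
  calc 2 * ((s ^ 3)⁻¹ * (y ^ 1)⁻¹) = 2 * (s ^ 3 * y ^ 1)⁻¹ := by rw [mul_inv]
    _ ≤ 2 * (x ^ 2 * y ^ 2)⁻¹ := by linarith
    _ = 2 * ((x ^ 2)⁻¹ * (y ^ 2)⁻¹) := by rw [mul_inv]

lemma summable_P1 : Summable P1 :=
  Summable.of_nonneg_of_le (fun p => by unfold P1; positivity) P1_le summable_FF

lemma summable_P2 : Summable P2 :=
  Summable.of_nonneg_of_le (fun p => by unfold P2; positivity) P2_le summable_FF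

lemma summable_P3 : Summable P3 :=
  Summable.of_nonneg_of_le (fun p => by unfold P3; positivity) P3_le (summable_FF.mul_left 2)

lemma summable_P4 : Summable P4 :=
  Summable.of_nonneg_of_le (fun p => by unfold P4; positivity) P4_le (summable_FF.mul_left 2)

lemma tsum_P1 : ∑' p : ℕ × ℕ, P1 p = Ssum 2 2 := by
  have h := tsum_triangle_le (fun (k n : ℕ) => (((n : ℝ) + 1) ^ 2)⁻¹ * (((k : ℝ) + 1/2) ^ 2)⁻¹)
    (summable_P1.congr fun p => rfl)
  calc ∑' p : ℕ × ℕ, P1 p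
      = ∑' p : ℕ × ℕ, (fun (k n : ℕ) => (((n : ℝ) + 1) ^ 2)⁻¹ * (((k : ℝ) + 1/2) ^ 2)⁻¹) p.1 (p.1 + p.2) :=
        tsum_congr fun p => rfl
    _ = ∑' n : ℕ, ∑ k ∈ Finset.range (n + 1),
          (((n : ℝ) + 1) ^ 2)⁻¹ * (((k : ℝ) + 1/2) ^ 2)⁻¹ := h
    _ = Ssum 2 2 := by
        unfold Ssum oddH
        refine tsum_congr fun n => ?_
        rw [← Finset.mul_sum, mul_comm]
        exact (div_eq_mul_inv _ _).symm

lemma tsum_P2 : ∑' p : ℕ × ℕ, P2 p = Ssum 2 2 := by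
  rw [← tsum_P1, ← (Equiv.prodComm ℕ ℕ).tsum_eq P1]
  refine tsum_congr fun p => ?_
  unfold P1 P2
  simp only [Equiv.prodComm_apply, Prod.fst_swap, Prod.snd_swap]
  rw [Nat.add_comm p.2 p.1]

lemma tsum_P3 : ∑' p : ℕ × ℕ, P3 p = 2 * Ssum 1 3 := by
  have hs : Summable (fun p : ℕ × ℕ =>
      ((((p.1 + p.2 : ℕ) : ℝ) + 1) ^ 3)⁻¹ * (((p.1 : ℝ) + 1/2) ^ 1)⁻¹) := by
    refine (summable_P3.mul_left 2⁻¹).congr fun p => ?_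
    unfold P3
    ring
  have h := tsum_triangle_le (fun (k n : ℕ) => (((n : ℝ) + 1) ^ 3)⁻¹ * (((k : ℝ) + 1/2) ^ 1)⁻¹)
    (hs.congr fun p => rfl)
  calc ∑' p : ℕ × ℕ, P3 p
      = ∑' p : ℕ × ℕ, 2 * (((((p.1 + p.2 : ℕ) : ℝ) + 1) ^ 3)⁻¹ * (((p.1 : ℝ) + 1/2) ^ 1)⁻¹) :=
        tsum_congr fun p => rfl
    _ = 2 * ∑' p : ℕ × ℕ, ((((p.1 + p.2 : ℕ) : ℝ) + 1) ^ 3)⁻¹ * (((p.1 : ℝ) + 1/2) ^ 1)⁻¹ :=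
        tsum_mul_left
    _ = 2 * Ssum 1 3 := by
        congr 1
        rw [show (fun p : ℕ × ℕ => ((((p.1 + p.2 : ℕ) : ℝ) + 1) ^ 3)⁻¹ * (((p.1 : ℝ) + 1/2) ^ 1)⁻¹)
          = fun p : ℕ × ℕ =>
            (fun (k n : ℕ) => (((n : ℝ) + 1) ^ 3)⁻¹ * (((k : ℝ) + 1/2) ^ 1)⁻¹) p.1 (p.1 + p.2) from rfl]
        rw [h]
        unfold Ssum oddH
        refine tsum_congr fun n => ?_
        rw [← Finset.mul_sum, mul_comm]
        exact (div_eq_mul_inv _ _).symm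

lemma tsum_P4 : ∑' p : ℕ × ℕ, P4 p = 2 * Ssum 1 3 := by
  rw [← tsum_P3, ← (Equiv.prodComm ℕ ℕ).tsum_eq P3]
  refine tsum_congr fun p => ?_
  unfold P3 P4
  simp only [Equiv.prodComm_apply, Prod.fst_swap, Prod.snd_swap]
  rw [Nat.add_comm p.2 p.1]

lemma S_relation : 2 * Ssum 2 2 + 4 * Ssum 1 3 = (Real.pi ^ 2 / 2) * (Real.pi ^ 2 / 2) := by
  have hsplit : ∑' p : ℕ × ℕ, FF p = ∑' p : ℕ × ℕ, (P1 p + P2 p + P3 p + P4 p) :=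
    tsum_congr pf_identity
  rw [tsum_FF] at hsplit
  rw [Summable.tsum_add ((summable_P1.add summable_P2).add summable_P3) summable_P4] at hsplit
  rw [Summable.tsum_add (summable_P1.add summable_P2) summable_P3] at hsplit
  rw [Summable.tsum_add summable_P1 summable_P2] at hsplit
  rw [tsum_P1, tsum_P2, tsum_P3, tsum_P4] at hsplit
  linarith

end Spart

section Tpart

lemma T_relation : 2 * Tsum 2 2 + Real.pi ^ 4 / 6 = (Real.pi ^ 2 / 2) * (Real.pi ^ 2 / 2) := by
  classical
  set g1 : ℕ × ℕ → ℝ := fun q => if q.1 < q.2 then FF q else 0 with hg1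
  set g2 : ℕ × ℕ → ℝ := fun q => if q.2 < q.1 then FF q else 0 with hg2
  set g3 : ℕ × ℕ → ℝ := fun q => if q.1 = q.2 then FF q else 0 with hg3
  have hFFnn : ∀ p : ℕ × ℕ, 0 ≤ FF p := fun p => by unfold FF; positivity
  have hsg1 : Summable g1 := by
    refine Summable.of_nonneg_of_le (fun p => ?_) (fun p => ?_) summable_FF <;>
      · simp only [hg1]
        split
        · first | exact hFFnn p | exact le_rfl
        · first | exact le_rfl | exact hFFnn p
  have hsg2 : Summable g2 := by
    refine Summable.of_nonneg_of_le (fun p => ?_) (fun p => ?_) summable_FF <;>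
      · simp only [hg2]
        split
        · first | exact hFFnn p | exact le_rfl
        · first | exact le_rfl | exact hFFnn p
  have hsg3 : Summable g3 := by
    refine Summable.of_nonneg_of_le (fun p => ?_) (fun p => ?_) summable_FF <;>
      · simp only [hg3]
        split
        · first | exact hFFnn p | exact le_rfl
        · first | exact le_rfl | exact hFFnn p
  -- split of FF
  have hsplit : ∑' p : ℕ × ℕ, FF p = ∑' p : ℕ × ℕ, (g1 p + g2 p + g3 p) := by
    refine tsum_congr fun p => ?_
    simp only [hg1, hg2, hg3]
    rcases lt_trichotomy p.1 p.2 with h | h | h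
    · rw [if_pos h, if_neg (by omega), if_neg (by omega)]; ring
    · rw [if_neg (by omega), if_neg (by omega), if_pos h]; ring
    · rw [if_neg (by omega), if_pos h, if_neg (by omega)]; ring
  -- g1 sum equals Tsum 2 2
  have hinj1 : Function.Injective (fun p : ℕ × ℕ => (p.1, p.1 + p.2 + 1)) := by
    rintro ⟨a, b⟩ ⟨a', b'⟩ hpq
    simp only [Prod.mk.injEq] at hpq
    obtain ⟨h1, h2⟩ := hpq
    exact Prod.ext h1 (by omega)
  have hzero1 : ∀ q ∉ Set.range (fun p : ℕ × ℕ => (p.1, p.1 + p.2 + 1)), g1 q = 0 := by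
    rintro ⟨k, n⟩ hq
    by_cases hkn : k < n
    · refine absurd ⟨(k, n - k - 1), ?_⟩ hq
      have hnk : k + (n - k - 1) + 1 = n := by omega
      simp [hnk]
    · simp only [hg1]
      rw [if_neg hkn]
  have hkey1 : ∑' p : ℕ × ℕ, g1 (p.1, p.1 + p.2 + 1) = ∑' q : ℕ × ℕ, g1 q :=
    hinj1.tsum_eq (by intro q hq; by_contra hc; exact hq (hzero1 q hc))
  have hcomp1 : (fun p : ℕ × ℕ => g1 (p.1, p.1 + p.2 + 1))
      = fun p : ℕ × ℕ => FF (p.1, p.1 + p.2 + 1) := by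
    funext p
    simp only [hg1]
    rw [if_pos (by omega : p.1 < p.1 + p.2 + 1)]
  have hsumtr : Summable (fun p : ℕ × ℕ => FF (p.1, p.1 + p.2 + 1)) := by
    rw [← hcomp1]
    exact hsg1.comp_injective hinj1
  have hg1T : ∑' q : ℕ × ℕ, g1 q = Tsum 2 2 := by
    rw [← hkey1, hcomp1]
    have h := tsum_triangle_lt
      (fun (k n : ℕ) => (((k : ℝ) + 1/2) ^ 2)⁻¹ * (((n : ℝ) + 1/2) ^ 2)⁻¹)
      (hsumtr.congr fun p => rfl)
    calc ∑' p : ℕ × ℕ, FF (p.1, p.1 + p.2 + 1)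
        = ∑' p : ℕ × ℕ, (fun (k n : ℕ) => (((k : ℝ) + 1/2) ^ 2)⁻¹ * (((n : ℝ) + 1/2) ^ 2)⁻¹)
            p.1 (p.1 + p.2 + 1) := tsum_congr fun p => rfl
      _ = ∑' n : ℕ, ∑ k ∈ Finset.range n,
            (((k : ℝ) + 1/2) ^ 2)⁻¹ * (((n : ℝ) + 1/2) ^ 2)⁻¹ := h
      _ = Tsum 2 2 := by
          unfold Tsum oddH
          refine tsum_congr fun n => ?_
          rw [← Finset.sum_mul]
          exact (div_eq_mul_inv _ _).symm
  -- g2 sum equals g1 sum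
  have hg2g1 : ∑' q : ℕ × ℕ, g2 q = ∑' q : ℕ × ℕ, g1 q := by
    rw [← (Equiv.prodComm ℕ ℕ).tsum_eq g1]
    refine tsum_congr fun p => ?_
    simp only [hg1, hg2, Equiv.prodComm_apply, Prod.fst_swap, Prod.snd_swap]
    by_cases h : p.2 < p.1
    · rw [if_pos h, if_pos h]
      unfold FF
      simp only [Prod.fst_swap, Prod.snd_swap]
      ring
    · rw [if_neg h, if_neg h]
  -- g3 sum equals ttv-4 value
  have hinj3 : Function.Injective (fun k : ℕ => ((k, k) : ℕ × ℕ)) := by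
    intro a b h
    simpa using congrArg Prod.fst h
  have hzero3 : ∀ q ∉ Set.range (fun k : ℕ => ((k, k) : ℕ × ℕ)), g3 q = 0 := by
    rintro ⟨k, n⟩ hq
    by_cases hkn : k = n
    · exact absurd ⟨k, by simp [hkn]⟩ hq
    · simp only [hg3]
      rw [if_neg hkn]
  have hkey3 : ∑' k : ℕ, g3 (k, k) = ∑' q : ℕ × ℕ, g3 q :=
    hinj3.tsum_eq (by intro q hq; by_contra hc; exact hq (hzero3 q hc))
  have hg3T : ∑' q : ℕ × ℕ, g3 q = Real.pi ^ 4 / 6 := by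
    rw [← hkey3]
    have hdiag : (fun k : ℕ => g3 (k, k)) = fun k : ℕ => (((k : ℝ) + 1/2) ^ 4)⁻¹ := by
      funext k
      have h0 : g3 (k, k) = FF (k, k) := by
        simp [hg3]
      rw [h0]
      unfold FF
      rw [← mul_inv, ← pow_add]
    rw [hdiag]
    exact hasSum_ttv_four.tsum_eq
  have htotal : (Real.pi ^ 2 / 2) * (Real.pi ^ 2 / 2)
      = ∑' q : ℕ × ℕ, g1 q + ∑' q : ℕ × ℕ, g2 q + ∑' q : ℕ × ℕ, g3 q := by
    rw [← tsum_FF, hsplit, Summable.tsum_add (hsg1.add hsg2) hsg3, Summable.tsum_add hsg1 hsg2]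
  rw [hg1T, hg2g1, hg1T, hg3T] at htotal
  linarith

end Tpart

theorem stmt7 : Tsum 2 2 - 2 * Ssum 1 3 - Ssum 2 2 = -Real.pi ^ 4 / 12 := by
  have h1 := S_relation
  have h2 := T_relation
  have h3 : (Real.pi ^ 2 / 2) * (Real.pi ^ 2 / 2) = Real.pi ^ 4 / 4 := by ring
  rw [h3] at h1 h2
  linarith
end
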